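/- arXiv:2003.10977 — 8 statements merged into one kernel-verified Lean document; each statement's English description precedes it below -/
import Mathlib

section
/- Let M be an n × kn matrix with rational entries. Then the columns of M can be partitioned into k disjoint blocks of size n each forming a nonsingular n × n submatrix if and only if for every 0 ≤ d ≤ n, the maximum number of columns of M whose ℚ-linear span has dimension at most d is at most dk. -/
open Finset

open Submodule Module

set_option linter.unusedSectionVars false

namespace AignerAux

variable {n k : ℕ} {E : Type*} [Fintype E] [DecidableEq E]

noncomputable def rk (v : E → (Fin n → ℚ)) (S : Finset E) : ℕ :=
  finrank ℚ (span ℚ (v '' ↑S))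

def Ind (v : E → (Fin n → ℚ)) (S : Finset E) : Prop := rk v S = S.card

variable (v : E → (Fin n → ℚ)) {S T : Finset E} {x y : E}

lemma image_coe (S : Finset E) : v '' ↑S = Set.range (fun x : S => v x) :=
  Set.image_eq_range _ _

lemma rk_le_card (S : Finset E) : rk v S ≤ S.card := by
  rw [rk, image_coe]
  exact (finrank_range_le_card _).trans (by simp)

lemma rk_mono (h : S ⊆ T) : rk v S ≤ rk v T :=
  Submodule.finrank_mono (span_mono (Set.image_mono (by exact_mod_cast h)))

lemma rk_le_n (S : Finset E) : rk v S ≤ n :=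
  (Submodule.finrank_le _).trans_eq (by simp [finrank_fintype_fun_eq_card])

lemma ind_iff : Ind v S ↔ LinearIndependent ℚ (fun x : S => v x) := by
  rw [linearIndependent_iff_card_eq_finrank_span, Ind, rk, image_coe]
  simp [Set.finrank, eq_comm]

lemma ind_subset (h : Ind v T) (hST : S ⊆ T) : Ind v S := by
  rw [ind_iff] at h ⊢
  refine h.comp (fun x : S => (⟨x.1, hST x.2⟩ : T)) ?_
  intro a b hab
  exact Subtype.ext (congrArg Subtype.val hab : _)

lemma ind_insert (hS : Ind v S) (hx : v x ∉ span ℚ (v '' ↑S)) : Ind v (insert x S) := by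
  have hxS : x ∉ S := fun h => hx (subset_span ⟨x, h, rfl⟩)
  have hlt : span ℚ (v '' ↑S) < span ℚ (v '' ↑(insert x S)) := by
    refine lt_of_le_of_ne (span_mono (Set.image_mono (by simp [Finset.coe_insert, Set.subset_insert]))) ?_
    intro hEq
    exact hx (hEq ▸ subset_span ⟨x, by simp, rfl⟩)
  have h2 := Submodule.finrank_lt_finrank_of_lt hlt
  have h3 := rk_le_card v (insert x S)
  rw [Finset.card_insert_of_notMem hxS] at h3
  rw [Ind, Finset.card_insert_of_notMem hxS]
  rw [Ind] at hS
  change rk v S < rk v (insert x S) at h2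
  omega

lemma mem_span_rep (h : v x ∈ span ℚ (v '' ↑S)) :
    ∃ c : E →₀ ℚ, ↑c.support ⊆ (↑S : Set E) ∧ Finsupp.linearCombination ℚ v c = v x := by
  obtain ⟨c, hc, hrep⟩ := (Finsupp.mem_span_image_iff_linearCombination ℚ).1 h
  exact ⟨c, Finsupp.mem_supported ℚ c |>.1 hc, hrep⟩

lemma lc_mem_span (c : E →₀ ℚ) :
    Finsupp.linearCombination ℚ v c ∈ span ℚ (v '' ↑c.support) :=
  (Finsupp.mem_span_image_iff_linearCombination ℚ).2
    ⟨c, (Finsupp.mem_supported ℚ c).2 subset_rfl, rfl⟩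


lemma swap_span (c : E →₀ ℚ) (hsupp : ↑c.support ⊆ (↑S : Set E))
    (hrep : Finsupp.linearCombination ℚ v c = v x) (hy : y ∈ c.support) (hxS : x ∉ S) :
    span ℚ (v '' ↑(insert x (S.erase y))) = span ℚ (v '' ↑S) := by
  have hyS : y ∈ S := hsupp hy
  have hcy : c y ≠ 0 := Finsupp.mem_support_iff.mp hy
  apply le_antisymm
  · rw [span_le]
    rintro _ ⟨z, hz, rfl⟩
    rw [Finset.coe_insert, Set.mem_insert_iff] at hz
    rcases hz with rfl | hz
    · rw [← hrep]
      exact span_mono (Set.image_mono hsupp) (lc_mem_span v c)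
    · exact subset_span ⟨z, (Finset.erase_subset _ _) (by exact_mod_cast hz), rfl⟩
  · rw [span_le]
    rintro _ ⟨z, hz, rfl⟩
    set P := span ℚ (v '' ↑(insert x (S.erase y))) with hP
    have hzS : z ∈ S := by exact_mod_cast hz
    by_cases hzy : z = y
    · subst hzy
      -- v y = (c y)⁻¹ • (v x - ∑ over support minus y)
      have hsum : ∑ w ∈ c.support, c w • v w = v x := by
        rw [← hrep, Finsupp.linearCombination_apply, Finsupp.sum]
      have hsplit : c z • v z + ∑ w ∈ c.support.erase z, c w • v w = v x := by
        rw [← Finset.add_sum_erase _ _ hy] at hsum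
        exact hsum
      have hmem : c z • v z ∈ P := by
        have hvx : v x ∈ P := subset_span ⟨x, by simp, rfl⟩
        have hrest : ∑ w ∈ c.support.erase z, c w • v w ∈ P := by
          refine Submodule.sum_mem _ fun w hw => Submodule.smul_mem _ _ (subset_span ⟨w, ?_, rfl⟩)
          have hwS : w ∈ S := hsupp (Finset.mem_of_mem_erase hw)
          have hwz : w ≠ z := Finset.ne_of_mem_erase hw
          simp [Finset.mem_insert, Finset.mem_erase, hwz, hwS]
        have : c z • v z = v x - ∑ w ∈ c.support.erase z, c w • v w := by
          rw [← hsplit]; abel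
        rw [this]
        exact Submodule.sub_mem _ hvx hrest
      have := Submodule.smul_mem P (c z)⁻¹ hmem
      rwa [inv_smul_smul₀ hcy] at this
    · exact subset_span ⟨z, by simp [Finset.mem_insert, Finset.mem_erase, hzy, hzS], rfl⟩


lemma ind_empty : Ind v (∅ : Finset E) := by
  simp [Ind, rk]

def Valid (v : E → (Fin n → ℚ)) (J : Fin k → Finset E) : Prop :=
  (∀ i, Ind v (J i)) ∧ ∀ i j, i ≠ j → Disjoint (J i) (J j)

def tot (J : Fin k → Finset E) : ℕ := ∑ i, (J i).card

inductive Reach (v : E → (Fin n → ℚ)) (J0 : Fin k → Finset E) (e : E) :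
    E → (Fin k → Finset E) → Prop
  | base : Reach v J0 e e J0
  | step {x : E} {J : Fin k → Finset E} (hx : Reach v J0 e x J) (i : Fin k) (c : E →₀ ℚ)
      (hsupp : ↑c.support ⊆ (↑(J i) : Set E)) (hrep : Finsupp.linearCombination ℚ v c = v x)
      {y : E} (hy : y ∈ c.support) :
      Reach v J0 e y (Function.update J i (insert x ((J i).erase y)))

theorem cover (v : E → Fin n → ℚ) (H : ∀ T : Finset E, T.card ≤ rk v T * k) :
    ∃ J : Fin k → Finset E, Valid v J ∧ ∀ x : E, ∃ i, x ∈ J i := by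
  classical
  obtain ⟨J0, hJ0v, hmax⟩ : ∃ J0 : Fin k → Finset E, Valid v J0 ∧
      ∀ J : Fin k → Finset E, Valid v J → tot J ≤ tot J0 := by
    have hne : (univ.filter fun J : Fin k → Finset E => Valid v J).Nonempty :=
      ⟨fun _ => ∅, Finset.mem_filter.2 ⟨Finset.mem_univ _, fun i => ind_empty v, fun i j _ => by simp⟩⟩
    obtain ⟨J0, hmem, hsup⟩ := Finset.exists_mem_eq_sup _ hne tot
    refine ⟨J0, (Finset.mem_filter.1 hmem).2, fun J hJ => ?_⟩
    exact le_of_le_of_eq (Finset.le_sup (f := tot) (Finset.mem_filter.2 ⟨Finset.mem_univ _, hJ⟩)) hsup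
  refine ⟨J0, hJ0v, ?_⟩
  by_contra hcov
  push_neg at hcov
  obtain ⟨e, he⟩ := hcov
  -- the reachable set
  set R : Finset E := univ.filter (fun z => ∃ J, Reach v J0 e z J) with hR
  have hmemR : ∀ {z : E} {J : Fin k → Finset E}, Reach v J0 e z J → z ∈ R :=
    fun h => Finset.mem_filter.2 ⟨Finset.mem_univ _, _, h⟩
  -- invariants
  have hInv : ∀ {z : E} {J : Fin k → Finset E}, Reach v J0 e z J →
      Valid v J ∧ (∀ i, z ∉ J i) ∧ (∀ i, span ℚ (v '' ↑(J i)) = span ℚ (v '' ↑(J0 i)))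
        ∧ (∀ i, (J i).card = (J0 i).card) := by
    intro z J h
    induction h with
    | base => exact ⟨hJ0v, he, fun i => rfl, fun i => rfl⟩
    | @step x J hx i c hsupp hrep y hy ih =>
      obtain ⟨⟨hind, hdisj⟩, hxnot, hspan, hcard⟩ := ih
      have hyJi : y ∈ J i := by exact_mod_cast hsupp (Finset.mem_coe.2 hy)
      have hxJi : x ∉ J i := hxnot i
      have hyx : y ≠ x := fun h => hxJi (h ▸ hyJi)
      have hxerase : x ∉ (J i).erase y := fun h => hxJi (Finset.mem_of_mem_erase h)
      have hspan' : span ℚ (v '' ↑(insert x ((J i).erase y))) = span ℚ (v '' ↑(J i)) :=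
        swap_span v c hsupp hrep hy hxJi
      have hpos : 0 < (J i).card := Finset.card_pos.2 ⟨y, hyJi⟩
      have hcard' : (insert x ((J i).erase y)).card = (J i).card := by
        rw [Finset.card_insert_of_notMem hxerase, Finset.card_erase_of_mem hyJi]
        omega
      have hIndi : Ind v (insert x ((J i).erase y)) := by
        rw [Ind, rk, hspan', hcard']
        exact hind i
      have hsubJ' : ∀ w, w ∈ insert x ((J i).erase y) → w = x ∨ w ∈ J i := by
        intro w hw
        rcases Finset.mem_insert.1 hw with rfl | hw
        · exact Or.inl rfl
        · exact Or.inr (Finset.mem_of_mem_erase hw)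
      refine ⟨⟨?_, ?_⟩, ?_, ?_, ?_⟩
      · intro j
        rcases eq_or_ne j i with rfl | hne
        · rw [Function.update_self]; exact hIndi
        · rw [Function.update_of_ne hne]; exact hind j
      · intro j j' hjj'
        rw [Finset.disjoint_left]
        intro w hw hw'
        rcases eq_or_ne j i with rfl | hne
        · rw [Function.update_self] at hw
          rw [Function.update_of_ne (Ne.symm hjj')] at hw'
          rcases hsubJ' w hw with rfl | hw
          · exact hxnot j' hw'
          · exact Finset.disjoint_left.1 (hdisj j j' hjj') hw hw'
        · rw [Function.update_of_ne hne] at hw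
          rcases eq_or_ne j' i with rfl | hne'
          · rw [Function.update_self] at hw'
            rcases hsubJ' w hw' with rfl | hw'
            · exact hxnot j hw
            · exact Finset.disjoint_left.1 (hdisj j j' hjj') hw hw'
          · rw [Function.update_of_ne hne'] at hw'
            exact Finset.disjoint_left.1 (hdisj j j' hjj') hw hw'
      · intro j
        rcases eq_or_ne j i with rfl | hne
        · rw [Function.update_self]
          intro hw
          rcases Finset.mem_insert.1 hw with h' | h'
          · exact hyx h'
          · exact Finset.notMem_erase y _ h'
        · rw [Function.update_of_ne hne]
          intro hw
          exact Finset.disjoint_left.1 (hdisj i j (Ne.symm hne)) hyJi hw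
      · intro j
        rcases eq_or_ne j i with rfl | hne
        · rw [Function.update_self, hspan']; exact hspan j
        · rw [Function.update_of_ne hne]; exact hspan j
      · intro j
        rcases eq_or_ne j i with rfl | hne
        · rw [Function.update_self, hcard']; exact hcard j
        · rw [Function.update_of_ne hne]; exact hcard j
  -- no augmentation: every reached element is spanned by every block
  have hA : ∀ {z : E} {J : Fin k → Finset E}, Reach v J0 e z J → ∀ i,
      ∃ c : E →₀ ℚ, ↑c.support ⊆ (↑(J i) : Set E) ∧ Finsupp.linearCombination ℚ v c = v z := by
    intro z J h i
    obtain ⟨⟨hind, hdisj⟩, hznot, hspan, hcard⟩ := hInv h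
    have htotJ : tot J = tot J0 := Finset.sum_congr rfl fun j _ => hcard j
    have hz : v z ∈ span ℚ (v '' ↑(J i)) := by
      by_contra hns
      have hIns : Ind v (insert z (J i)) := ind_insert v (hind i) hns
      have hzJi : z ∉ J i := hznot i
      set J'' := Function.update J i (insert z (J i)) with hJ''
      have hval : Valid v J'' := by
        constructor
        · intro j
          rcases eq_or_ne j i with rfl | hne
          · rw [hJ'', Function.update_self]; exact hIns
          · rw [hJ'', Function.update_of_ne hne]; exact hind j
        · intro j j' hjj'
          rw [Finset.disjoint_left]
          intro w hw hw'
          have hmem'' : ∀ j₀, w ∈ J'' j₀ → w = z ∨ w ∈ J j₀ := by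
            intro j₀ hw₀
            rcases eq_or_ne j₀ i with rfl | hne
            · rw [hJ'', Function.update_self] at hw₀
              rcases Finset.mem_insert.1 hw₀ with h' | h'
              · exact Or.inl h'
              · exact Or.inr h'
            · rw [hJ'', Function.update_of_ne hne] at hw₀
              exact Or.inr hw₀
          rcases hmem'' j hw with rfl | hwj
          · rcases hmem'' j' hw' with h' | h'
            · -- w = z in both: j = i and j' = i, contradiction with j ≠ j'
              have hj : j = i := by
                by_contra hne
                rw [hJ'', Function.update_of_ne hne] at hw
                exact hznot j hw
              have hj' : j' = i := by
                by_contra hne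
                rw [hJ'', Function.update_of_ne hne] at hw'
                exact hznot j' hw'
              exact hjj' (hj.trans hj'.symm)
            · exact hznot j' h'
          · rcases hmem'' j' hw' with rfl | hwj'
            · exact hznot j hwj
            · exact Finset.disjoint_left.1 (hdisj j j' hjj') hwj hwj'
      have htot'' : tot J'' = tot J + 1 := by
        have hsplit1 := Finset.sum_eq_sum_sdiff_singleton_add (Finset.mem_univ i)
          (fun j => (J'' j).card)
        have hsplit2 := Finset.sum_eq_sum_sdiff_singleton_add (Finset.mem_univ i)
          (fun j => (J j).card)
        have hagree : ∑ j ∈ univ \ {i}, (J'' j).card = ∑ j ∈ univ \ {i}, (J j).card :=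
          Finset.sum_congr rfl fun j hj => by
            rw [hJ'', Function.update_of_ne (by simpa using (Finset.mem_sdiff.1 hj).2)]
        have hii : (J'' i).card = (J i).card + 1 := by
          rw [hJ'', Function.update_self, Finset.card_insert_of_notMem hzJi]
        rw [tot, tot, hsplit1, hsplit2, hagree, hii]
        omega
      have := hmax J'' hval
      omega
    exact mem_span_rep v hz
  have hA' : ∀ {z : E} {J : Fin k → Finset E}, Reach v J0 e z J → ∀ i,
      v z ∈ span ℚ (v '' ↑(J i ∩ R)) := by
    intro z J h i
    obtain ⟨c, hcs, hcr⟩ := hA h i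
    have hsub : ↑c.support ⊆ (↑(J i ∩ R) : Set E) := by
      intro w hw
      have hw' : w ∈ c.support := by exact_mod_cast hw
      have hwR : w ∈ R := hmemR (Reach.step h i c hcs hcr hw')
      have hwJ : w ∈ J i := by exact_mod_cast hcs hw
      exact Finset.mem_coe.2 (Finset.mem_inter.2 ⟨hwJ, hwR⟩)
    rw [← hcr]
    exact span_mono (Set.image_mono hsub) (lc_mem_span v c)
  have hB : ∀ {z : E} {J : Fin k → Finset E}, Reach v J0 e z J → ∀ i,
      span ℚ (v '' ↑(J i ∩ R)) ≤ span ℚ (v '' ↑(J0 i ∩ R)) := by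
    intro z J h
    induction h with
    | base => exact fun i => le_rfl
    | @step x J hx i c hsupp hrep y hy ih =>
      intro j
      rcases eq_or_ne j i with rfl | hne
      · rw [Function.update_self]
        have h1 : (insert x ((J j).erase y)) ∩ R ⊆ insert x (J j ∩ R) := by
          intro w hw
          obtain ⟨hw1, hw2⟩ := Finset.mem_inter.1 hw
          rcases Finset.mem_insert.1 hw1 with rfl | hw1
          · exact Finset.mem_insert_self _ _
          · exact Finset.mem_insert_of_mem
              (Finset.mem_inter.2 ⟨Finset.mem_of_mem_erase hw1, hw2⟩)
        refine le_trans (span_mono (Set.image_mono (Finset.coe_subset.2 h1))) ?_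
        rw [Finset.coe_insert, Set.image_insert_eq, Submodule.span_insert]
        refine sup_le ?_ (ih j)
        rw [Submodule.span_singleton_le_iff_mem]
        exact ih j (hA' hx j)
      · rw [Function.update_of_ne hne]
        exact ih j
  -- final counting contradiction
  have heR : e ∈ R := hmemR Reach.base
  have hrkR : ∀ i : Fin k, rk v R ≤ (J0 i ∩ R).card := by
    intro i
    refine le_trans (Submodule.finrank_mono (span_le.2 ?_)) (rk_le_card v (J0 i ∩ R))
    rintro _ ⟨z, hz, rfl⟩
    have hzR : z ∈ R := by exact_mod_cast hz
    obtain ⟨J, hJ⟩ := (Finset.mem_filter.1 hzR).2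
    exact hB hJ i (hA' hJ i)
  have hsum : ∑ i : Fin k, (J0 i ∩ R).card ≤ R.card - 1 := by
    have hbU : (univ.biUnion fun i => J0 i ∩ R) ⊆ R.erase e := by
      intro w hw
      obtain ⟨i, -, hw⟩ := Finset.mem_biUnion.1 hw
      obtain ⟨h1, h2⟩ := Finset.mem_inter.1 hw
      exact Finset.mem_erase.2 ⟨fun hwe => he i (hwe ▸ h1), h2⟩
    calc ∑ i : Fin k, (J0 i ∩ R).card
        = (univ.biUnion fun i => J0 i ∩ R).card :=
          (Finset.card_biUnion (fun i _ j _ hij =>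
            (hJ0v.2 i j hij).mono Finset.inter_subset_left Finset.inter_subset_left)).symm
      _ ≤ (R.erase e).card := Finset.card_le_card hbU
      _ = R.card - 1 := Finset.card_erase_of_mem heR
  have h1 : 1 ≤ R.card := Finset.card_pos.2 ⟨e, heR⟩
  have h2 : rk v R * k ≤ ∑ i : Fin k, (J0 i ∩ R).card := by
    calc rk v R * k = ∑ _i : Fin k, rk v R := by
          simp [Finset.sum_const, mul_comm]
      _ ≤ _ := Finset.sum_le_sum fun i _ => hrkR i
  have := H R
  omega

end AignerAux

open AignerAux

/-- **Aigner's criterion.** An `n × kn` rational matrix is `k`-partitionable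
(its columns can be split into `k` blocks of size `n`, each forming a nonsingular
`n × n` submatrix) if and only if, for every `0 ≤ d ≤ n`, any set of columns whose
`ℚ`-linear span has dimension at most `d` has size at most `dk`. -/
theorem stmt2 (n k : ℕ) (hn : 0 < n) (hk : 0 < k)
    (M : Matrix (Fin n) (Fin (k * n)) ℚ) :
    (∃ e : Fin k → Fin n → Fin (k * n),
        Function.Bijective (fun p : Fin k × Fin n => e p.1 p.2) ∧
        ∀ b : Fin k, (Matrix.of fun i j => M i (e b j)).det ≠ 0)
    ↔ (∀ d : ℕ, d ≤ n → ∀ T : Finset (Fin (k * n)),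
        Module.finrank ℚ ↥(Submodule.span ℚ ((fun j i => M i j) '' ↑T)) ≤ d →
        T.card ≤ d * k) := by
  classical
  set v : Fin (k * n) → (Fin n → ℚ) := fun j i => M i j with hv
  constructor
  · rintro ⟨e, hbij, hdet⟩ d hd T hT
    have hinj : ∀ b, Function.Injective (e b) := by
      intro b j j' h
      have := hbij.injective (a₁ := (b, j)) (a₂ := (b, j')) h
      exact congrArg Prod.snd this
    set B : Fin k → Finset (Fin (k * n)) := fun b => Finset.image (e b) univ with hB
    have hspanB : ∀ b, Submodule.span ℚ (v '' ↑(B b)) =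
        Submodule.span ℚ (Set.range fun j : Fin n => v (e b j)) := by
      intro b
      rw [hB]
      congr 1
      rw [Finset.coe_image, Finset.coe_univ, Set.image_univ, ← Set.range_comp]
      rfl
    have hli : ∀ b, LinearIndependent ℚ (fun j : Fin n => v (e b j)) := by
      intro b
      have hU : IsUnit (Matrix.of fun i j => M i (e b j)) :=
        (Matrix.isUnit_iff_isUnit_det _).2 (isUnit_iff_ne_zero.2 (hdet b))
      exact Matrix.linearIndependent_cols_iff_isUnit.2 hU
    have hIndB : ∀ b, Ind v (B b) := by
      intro b
      rw [Ind, rk, hspanB b, finrank_span_eq_card (hli b), hB,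
        Finset.card_image_of_injective _ (hinj b)]
      simp
    have hcount : T.card = ∑ b, (T ∩ B b).card := by
      rw [← Finset.card_biUnion]
      · congr 1
        ext x
        simp only [Finset.mem_biUnion, Finset.mem_inter, Finset.mem_univ, true_and]
        constructor
        · intro hx
          obtain ⟨⟨b, j⟩, hbj⟩ := hbij.surjective x
          exact ⟨b, hx, by rw [hB]; exact Finset.mem_image.2 ⟨j, Finset.mem_univ _, hbj⟩⟩
        · rintro ⟨b, hx, -⟩
          exact hx
      · intro b _ b' _ hbb
        rw [Function.onFun, Finset.disjoint_left]
        intro x hx1' hx2'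
        have hx1 := (Finset.mem_inter.1 hx1').2
        have hx2 := (Finset.mem_inter.1 hx2').2
        rw [hB] at hx1 hx2
        obtain ⟨j, -, rfl⟩ := Finset.mem_image.1 hx1
        obtain ⟨j', -, hj'⟩ := Finset.mem_image.1 hx2
        exact hbb (congrArg Prod.fst (hbij.injective (a₁ := (b, j)) (a₂ := (b', j')) hj'.symm))
    have hblock : ∀ b, (T ∩ B b).card ≤ d := by
      intro b
      have hIndTB : Ind v (T ∩ B b) := ind_subset v (hIndB b) Finset.inter_subset_right
      rw [Ind] at hIndTB
      rw [← hIndTB]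
      exact le_trans (rk_mono v Finset.inter_subset_left) (le_trans le_rfl hT)
    calc T.card = ∑ b, (T ∩ B b).card := hcount
      _ ≤ ∑ _b : Fin k, d := Finset.sum_le_sum fun b _ => hblock b
      _ = d * k := by simp [mul_comm]
  · intro hcond
    have H : ∀ T : Finset (Fin (k * n)), T.card ≤ rk v T * k :=
      fun T => hcond (rk v T) (rk_le_n v T) T le_rfl
    obtain ⟨J, ⟨hind, hdisj⟩, hcov⟩ := cover v H
    have hle : ∀ b, (J b).card ≤ n := fun b => (hind b) ▸ rk_le_n v (J b)
    have hsum : ∑ b, (J b).card = k * n := by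
      rw [← Finset.card_biUnion (fun i _ j _ hij => hdisj i j hij)]
      have huniv : univ.biUnion J = univ := by
        ext x
        simp only [Finset.mem_biUnion, Finset.mem_univ, iff_true, true_and]
        exact hcov x
      rw [huniv, Finset.card_univ, Fintype.card_fin]
    have hcard : ∀ b, (J b).card = n := by
      by_contra hc
      push_neg at hc
      obtain ⟨b, hb⟩ := hc
      have hlt : ∑ b, (J b).card < ∑ _b : Fin k, n :=
        Finset.sum_lt_sum (fun i _ => hle i) ⟨b, Finset.mem_univ b, lt_of_le_of_ne (hle b) hb⟩
      rw [hsum] at hlt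
      simp [mul_comm] at hlt
    have hcard' : ∀ b, Fintype.card (J b) = n := fun b => by
      rw [Fintype.card_coe]; exact hcard b
    set q : ∀ b : Fin k, (J b) ≃ Fin n := fun b => Fintype.equivFinOfCardEq (hcard' b) with hq
    refine ⟨fun b j => ((q b).symm j : Fin (k * n)), ?_, ?_⟩
    · rw [Fintype.bijective_iff_injective_and_card]
      constructor
      · rintro ⟨b, j⟩ ⟨b', j'⟩ hpq
        simp only at hpq
        have hmem1 : ((q b).symm j : Fin (k * n)) ∈ J b := ((q b).symm j).2
        have hmem2 : ((q b').symm j' : Fin (k * n)) ∈ J b' := ((q b').symm j').2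
        have hbb : b = b' := by
          by_contra hne
          rw [hpq] at hmem1
          exact Finset.disjoint_left.1 (hdisj b b' hne) hmem1 hmem2
        subst hbb
        have h2 : (q b).symm j = (q b).symm j' := Subtype.ext hpq
        have h3 := (q b).symm.injective h2
        rw [h3]
      · simp
    · intro b
      have h1 : LinearIndependent ℚ (fun x : (J b) => v x) := (ind_iff v).1 (hind b)
      have hli : LinearIndependent ℚ (fun j : Fin n => v ((q b).symm j : Fin (k * n))) :=
        h1.comp (q b).symm (q b).symm.injective
      have hU : IsUnit (Matrix.of fun i j => M i ((q b).symm j : Fin (k * n))) :=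
        Matrix.linearIndependent_cols_iff_isUnit.1 hli
      exact isUnit_iff_ne_zero.1 ((Matrix.isUnit_iff_isUnit_det _).1 hU)
end

section
/- Let q, n, s be positive integers and M ∈ ℚ^{n×s} be quasi-q-partitionable, i.e., s ≥ nq and μ(d; M) ≤ dq for all 0 ≤ d < n. Then M has full rank n, and every n × nq submatrix of M (obtained by selecting nq columns) is q-partitionable. -/
open Finset
set_option linter.unusedSectionVars false
set_option maxHeartbeats 1000000

section Horn

variable {V : Type*} [AddCommGroup V] [Module ℚ V] [FiniteDimensional ℚ V]
variable {ι : Type*} [Fintype ι] [DecidableEq ι]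
variable (v : ι → V)

/-- Span of the image of a finset of indices. -/
def hsp (S : Finset ι) : Submodule ℚ V := Submodule.span ℚ (v '' ↑S)

/-- Independence of the family indexed by a finset. -/
def hInd (S : Finset ι) : Prop := LinearIndependent ℚ (fun x : (S : Set ι) => v x)

variable {v}

lemma hsp_mono {S T : Finset ι} (h : S ⊆ T) : hsp v S ≤ hsp v T :=
  Submodule.span_mono (Set.image_mono (by exact_mod_cast h))

lemma hInd_mono {S T : Finset ι} (h : S ⊆ T) (hT : hInd v T) : hInd v S := by
  have : (fun x : (S : Set ι) => v x) =
      (fun x : (T : Set ι) => v x) ∘ Set.inclusion (by exact_mod_cast h) := rfl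
  rw [hInd, this]
  exact hT.comp _ (Set.inclusion_injective _)

lemma hInd_insert {S : Finset ι} {a : ι} (ha : a ∉ S) (hS : hInd v S)
    (hv : v a ∉ hsp v S) : hInd v (insert a S) := by
  rw [hInd, Finset.coe_insert]
  exact (linearIndepOn_insert (by exact_mod_cast ha)).2 ⟨hS, hv⟩

lemma hInd_card {S : Finset ι} (h : hInd v S) : S.card = Module.finrank ℚ (hsp v S) := by
  have := linearIndependent_iff_card_eq_finrank_span.mp h
  rw [Set.finrank, ← Set.image_eq_range] at this
  rw [hsp, ← this]
  simp

lemma hInd_empty : hInd v (∅ : Finset ι) := by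
  rw [hInd, Finset.coe_empty]
  exact linearIndependent_empty_type

open scoped Classical in
/-- Circuit lemma. -/
lemma circuit_span {S : Finset ι} (hS : hInd v S) {y : ι} (hy : v y ∈ hsp v S) :
    v y ∈ hsp v (S.filter fun z => v y ∉ hsp v (S.erase z)) := by
  classical
  rw [hsp, Finsupp.mem_span_image_iff_linearCombination] at hy
  obtain ⟨l, hl, hly⟩ := hy
  rw [hsp, Finsupp.mem_span_image_iff_linearCombination]
  refine ⟨l, ?_, hly⟩
  intro z hz
  have hzS : z ∈ S := hl hz
  rw [Finset.mem_coe, Finset.mem_filter]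
  refine ⟨hzS, fun hcon => ?_⟩
  rw [hsp, Finsupp.mem_span_image_iff_linearCombination] at hcon
  obtain ⟨l', hl', hl'y⟩ := hcon
  have hsub : l - l' ∈ Finsupp.supported ℚ ℚ (S : Set ι) := by
    apply sub_mem hl
    exact Finsupp.supported_mono (by exact_mod_cast Finset.erase_subset z S) hl'
  have hzero : Finsupp.linearCombination ℚ v (l - l') = 0 := by
    rw [map_sub, hly, hl'y, sub_self]
  have h0 : l - l' = 0 := by
    have := linearIndepOn_iff.mp hS (l - l') hsub hzero
    exact this
  have : l z = l' z := by
    have := congrArg (fun f => f z) h0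
    simpa [sub_eq_zero] using this
  have hz' : l' z = 0 := by
    by_contra hne
    have : z ∈ (S.erase z : Set ι) := hl' (Finsupp.mem_support_iff.2 hne)
    simp at this
  have hlz : l z ≠ 0 := by simpa using hz
  exact hlz (this.trans hz')

/-- Exchange preserves the span. -/
lemma exchange_span {S : Finset ι} {e f : ι} (hf : f ∈ S)
    (he : v e ∈ hsp v S) (hne : v e ∉ hsp v (S.erase f)) :
    hsp v (insert e (S.erase f)) = hsp v S := by
  have himg : (v '' ↑S : Set V) = insert (v f) (v '' ↑(S.erase f)) := by
    conv_lhs => rw [← Finset.insert_erase hf]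
    rw [Finset.coe_insert, Set.image_insert_eq]
  have he' : v e ∈ Submodule.span ℚ (insert (v f) (v '' ↑(S.erase f))) := by
    rw [hsp, himg] at he; exact he
  obtain ⟨a, z, hz, hez⟩ := Submodule.mem_span_insert.mp he'
  have ha : a ≠ 0 := by
    rintro rfl
    rw [zero_smul, zero_add] at hez
    exact hne (hez ▸ hz)
  apply le_antisymm
  · rw [hsp, Submodule.span_le]
    rintro _ ⟨w, hw, rfl⟩
    rw [Finset.coe_insert, Set.mem_insert_iff] at hw
    rcases hw with rfl | hw
    · exact he
    · exact hsp_mono (Finset.erase_subset f S) (Submodule.subset_span ⟨w, hw, rfl⟩)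
  · rw [hsp, Submodule.span_le]
    rintro _ ⟨w, hw, rfl⟩
    by_cases hwf : w = f
    · subst hwf
      have hvf : v w = a⁻¹ • (v e - z) := by
        rw [hez]; rw [smul_sub, smul_add, smul_smul, inv_mul_cancel₀ ha, one_smul]
        abel
      rw [hvf]
      apply Submodule.smul_mem
      apply Submodule.sub_mem
      · exact Submodule.subset_span ⟨e, by simp, rfl⟩
      · exact hsp_mono (Finset.subset_insert _ _) hz
    · have : w ∈ S.erase f := Finset.mem_erase.2 ⟨hwf, hw⟩
      exact Submodule.subset_span ⟨w, by exact_mod_cast Finset.mem_insert_of_mem this, rfl⟩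

/-- Exchange preserves independence. -/
lemma exchange_ind {S : Finset ι} {e f : ι} (hS : hInd v S) (hf : f ∈ S)
    (hne : v e ∉ hsp v (S.erase f)) : hInd v (insert e (S.erase f)) := by
  by_cases hef : e = f
  · subst hef; rw [Finset.insert_erase hf]; exact hS
  · have heS : e ∉ S.erase f := by
      intro hmem
      exact hne (Submodule.subset_span ⟨e, by exact_mod_cast hmem, rfl⟩)
    exact hInd_insert heS (hInd_mono (Finset.erase_subset f S) hS) hne

variable (v) in
/-- Union of a family of finsets. -/
def hUU {q : ℕ} (I : Fin q → Finset ι) : Finset ι := Finset.univ.biUnion I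

variable (v) in
def hArc {q : ℕ} (I : Fin q → Finset ι) (y z : ι) : Prop :=
  ∃ j, v y ∈ hsp v (I j) ∧ z ∈ I j ∧ v y ∉ hsp v ((I j).erase z)

variable (v) in
def hFree {q : ℕ} (I : Fin q → Finset ι) (y : ι) : Prop := ∃ j, v y ∉ hsp v (I j)

variable (v) in
def hPath {q : ℕ} (I : Fin q → Finset ι) (x : ι) (k : ℕ) : Prop :=
  ∃ p : ℕ → ι, p 0 = x ∧ (∀ t < k, hArc v I (p t) (p (t + 1))) ∧ hFree v I (p k)

lemma mem_hUU {q : ℕ} {I : Fin q → Finset ι} {a : ι} : a ∈ hUU I ↔ ∃ j, a ∈ I j := by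
  simp [hUU]


section Aug

variable {q : ℕ}

lemma augment :
    ∀ (k : ℕ) (I : Fin q → Finset ι) (x : ι),
      (∀ j, hInd v (I j)) →
      (∀ j1 j2 : Fin q, j1 ≠ j2 → ∀ a ∈ I j1, a ∉ I j2) →
      x ∉ hUU I → hPath v I x k →
      ∃ J : Fin q → Finset ι, (∀ j, hInd v (J j)) ∧
        (∀ j1 j2 : Fin q, j1 ≠ j2 → ∀ a ∈ J j1, a ∉ J j2) ∧
        hUU J = insert x (hUU I) := by
  intro k
  induction k using Nat.strong_induction_on with
  | _ k IH =>
  intro I x hind hd hx hpath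
  by_cases hmin : ∃ k' < k, hPath v I x k'
  · obtain ⟨k', hk', hp'⟩ := hmin
    exact IH k' hk' I x hind hd hx hp'
  push_neg at hmin
  obtain ⟨p, hp0, harc, hfree⟩ := hpath
  have hxne : ∀ j', x ∉ I j' := fun j' hm => hx (mem_hUU.2 ⟨j', hm⟩)
  obtain _ | k' := k
  · -- base case : x itself is free
    obtain ⟨j, hj⟩ := hfree
    rw [hp0] at hj
    refine ⟨Function.update I j (insert x (I j)), ?_, ?_, ?_⟩
    · intro j'
      by_cases h : j' = j
      · subst h; rw [Function.update_self]
        exact hInd_insert (hxne j') (hind j') hj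
      · rw [Function.update_of_ne h]; exact hind j'
    · intro j1 j2 hne a h1 h2
      have hmem : ∀ j' a', a' ∈ Function.update I j (insert x (I j)) j' →
          a' = x ∨ a' ∈ I j' := by
        intro j' a' h'
        by_cases hj' : j' = j
        · rw [hj', Function.update_self, Finset.mem_insert] at h'
          rcases h' with h' | h'
          · exact Or.inl h'
          · exact Or.inr (hj' ▸ h')
        · rw [Function.update_of_ne hj'] at h'; exact Or.inr h'
      have hxU : ∀ j', x ∈ Function.update I j (insert x (I j)) j' → j' = j := by
        intro j' h'
        by_contra hj'
        rw [Function.update_of_ne hj'] at h'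
        exact hxne j' h'
      rcases hmem j1 a h1 with hax | ha1
      · rw [hax] at h1 h2
        exact hne ((hxU j1 h1).trans (hxU j2 h2).symm)
      · rcases hmem j2 a h2 with hax | ha2
        · rw [hax] at ha1; exact hxne j1 ha1
        · exact hd j1 j2 hne a ha1 ha2
    · ext a
      rw [mem_hUU, Finset.mem_insert, mem_hUU]
      constructor
      · rintro ⟨j', hj'⟩
        by_cases h : j' = j
        · rw [h, Function.update_self, Finset.mem_insert] at hj'
          rcases hj' with hax | hj'
          · exact Or.inl hax
          · exact Or.inr ⟨j, hj'⟩
        · rw [Function.update_of_ne h] at hj'; exact Or.inr ⟨j', hj'⟩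
      · rintro (hax | ⟨j', hj'⟩)
        · refine ⟨j, ?_⟩
          rw [Function.update_self, hax]
          exact Finset.mem_insert_self _ _
        · by_cases h : j' = j
          · refine ⟨j, ?_⟩
            rw [Function.update_self]
            exact Finset.mem_insert_of_mem (h ▸ hj')
          · exact ⟨j', by rw [Function.update_of_ne h]; exact hj'⟩
  · -- inductive case
    obtain ⟨j₁, hA0, hB0, hC0⟩ := harc 0 (Nat.succ_pos _)
    rw [hp0] at hA0 hC0
    have hshort : ∀ t, 0 < t → t < k' + 1 → p (t + 1) ∈ I j₁ →
        p (t + 1) ≠ p 1 ∧ v x ∈ hsp v ((I j₁).erase (p (t + 1))) := by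
      intro t ht0 htk hmem
      have hnoarc : ¬ hArc v I x (p (t + 1)) := by
        intro harcx'
        apply hmin (k' + 1 - t) (by omega)
        refine ⟨fun u => if u = 0 then x else p (u + t), by simp, ?_, ?_⟩
        · intro u hu
          by_cases hu0 : u = 0
          · subst hu0
            simp only [if_pos rfl, if_neg (by omega : ¬(0 + 1 = 0))]
            have h11 : 0 + 1 + t = t + 1 := by omega
            rw [h11]
            exact harcx'
          · simp only [if_neg hu0, if_neg (by omega : ¬(u + 1 = 0))]
            have h12 : u + 1 + t = u + t + 1 := by omega
            rw [h12]
            exact harc (u + t) (by omega)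
        · have hne0 : ¬(k' + 1 - t = 0) := by omega
          simp only [if_neg hne0]
          have h13 : k' + 1 - t + t = k' + 1 := by omega
          rw [h13]
          exact hfree
      constructor
      · intro heq
        exact hnoarc ⟨j₁, hA0, hmem, by rw [heq]; exact hC0⟩
      · by_contra hcon
        exact hnoarc ⟨j₁, hA0, hmem, hcon⟩
    set I' := Function.update I j₁ (insert x ((I j₁).erase (p 1))) with hI'
    have hI'j₁ : I' j₁ = insert x ((I j₁).erase (p 1)) := Function.update_self _ _ _
    have hspan_eq : hsp v (I' j₁) = hsp v (I j₁) := by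
      rw [hI'j₁]; exact exchange_span hB0 hA0 hC0
    have hind' : ∀ j, hInd v (I' j) := by
      intro j
      by_cases h : j = j₁
      · rw [h, hI'j₁]; exact exchange_ind (hind j₁) hB0 hC0
      · rw [hI', Function.update_of_ne h]; exact hind j
    have hsub' : ∀ j a, a ∈ I' j → a = x ∨ a ∈ I j := by
      intro j a h
      by_cases hj : j = j₁
      · rw [hj, hI'j₁, Finset.mem_insert] at h
        rcases h with hax | h
        · exact Or.inl hax
        · exact Or.inr (hj ▸ Finset.mem_of_mem_erase h)
      · rw [hI', Function.update_of_ne hj] at h; exact Or.inr h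
    have hxI' : ∀ j, x ∈ I' j → j = j₁ := by
      intro j h
      by_contra hj
      rw [hI', Function.update_of_ne hj] at h
      exact hxne j h
    have hd' : ∀ j1 j2 : Fin q, j1 ≠ j2 → ∀ a ∈ I' j1, a ∉ I' j2 := by
      intro j1 j2 hne a h1 h2
      rcases hsub' j1 a h1 with rfl | ha1
      · exact hne ((hxI' j1 h1).trans (hxI' j2 h2).symm)
      · rcases hsub' j2 a h2 with rfl | ha2
        · exact hne ((hxI' j1 h1).trans (hxI' j2 h2).symm)
        · exact hd j1 j2 hne a ha1 ha2
    have hp1only : ∀ j, p 1 ∈ I j → j = j₁ := by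
      intro j hmem
      by_contra hne
      exact hd j j₁ hne _ hmem hB0
    have hU' : hUU I' = insert x ((hUU I).erase (p 1)) := by
      ext a
      rw [mem_hUU, Finset.mem_insert, Finset.mem_erase, mem_hUU]
      constructor
      · rintro ⟨j, hj⟩
        by_cases h : j = j₁
        · rw [h, hI'j₁, Finset.mem_insert] at hj
          rcases hj with hax | hj
          · exact Or.inl hax
          · rw [Finset.mem_erase] at hj
            exact Or.inr ⟨hj.1, ⟨j₁, hj.2⟩⟩
        · rw [hI', Function.update_of_ne h] at hj
          refine Or.inr ⟨?_, ⟨j, hj⟩⟩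
          intro heq
          exact h (hp1only j (heq ▸ hj))
      · rintro (hax | ⟨hne, j, hj⟩)
        · refine ⟨j₁, ?_⟩
          rw [hI'j₁, hax]
          exact Finset.mem_insert_self _ _
        · by_cases h : j = j₁
          · refine ⟨j₁, ?_⟩
            rw [hI'j₁]
            exact Finset.mem_insert_of_mem (Finset.mem_erase.2 ⟨hne, h ▸ hj⟩)
          · exact ⟨j, by rw [hI', Function.update_of_ne h]; exact hj⟩
    have hx1' : p 1 ∉ hUU I' := by
      rw [hU', Finset.mem_insert, Finset.mem_erase]
      rintro (h | ⟨h, -⟩)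
      · exact hxne j₁ (h ▸ hB0)
      · exact h rfl
    have hsperase : ∀ z, z ∈ I j₁ → z ≠ p 1 → v x ∈ hsp v ((I j₁).erase z) →
        hsp v ((I' j₁).erase z) = hsp v ((I j₁).erase z) := by
      intro z hz hzne hvx
      have hzx : x ≠ z := fun h => hxne j₁ (h ▸ hz)
      rw [hI'j₁, Finset.erase_insert_of_ne hzx, Finset.erase_right_comm]
      refine exchange_span ?_ hvx ?_
      · exact Finset.mem_erase.2 ⟨fun h => hzne h.symm, hB0⟩
      · intro hcon
        apply hC0
        refine hsp_mono ?_ hcon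
        rw [Finset.erase_right_comm]
        exact Finset.erase_subset _ _
    have hnewpath : hPath v I' (p 1) k' := by
      refine ⟨fun u => p (u + 1), rfl, ?_, ?_⟩
      · intro t ht
        obtain ⟨j, hA, hB, hC⟩ := harc (t + 1) (by omega)
        by_cases hj : j = j₁
        · rw [hj] at hA hB hC
          obtain ⟨hne1, hvx⟩ := hshort (t + 1) (by omega) (by omega) hB
          refine ⟨j₁, ?_, ?_, ?_⟩
          · rw [hspan_eq]; exact hA
          · rw [hI'j₁]
            exact Finset.mem_insert_of_mem (Finset.mem_erase.2 ⟨hne1, hB⟩)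
          · rw [hsperase _ hB hne1 hvx]; exact hC
        · exact ⟨j, by rw [hI', Function.update_of_ne hj]; exact hA,
            by rw [hI', Function.update_of_ne hj]; exact hB,
            by rw [hI', Function.update_of_ne hj]; exact hC⟩
      · obtain ⟨j, hj⟩ := hfree
        by_cases h : j = j₁
        · rw [h] at hj
          exact ⟨j₁, by rw [hspan_eq]; exact hj⟩
        · exact ⟨j, by rw [hI', Function.update_of_ne h]; exact hj⟩
    obtain ⟨J, hJ1, hJ2, hJU⟩ := IH k' (by omega) I' (p 1) hind' hd' hx1' hnewpath
    refine ⟨J, hJ1, hJ2, ?_⟩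
    rw [hJU, hU', Finset.insert_comm, Finset.insert_erase (mem_hUU.2 ⟨j₁, hB0⟩)]

open scoped Classical in
lemma no_path_contra (HH : ∀ T : Finset ι, T.card ≤ q * Module.finrank ℚ (hsp v T))
    (I : Fin q → Finset ι) (x : ι) (hind : ∀ j, hInd v (I j))
    (hd : ∀ j1 j2 : Fin q, j1 ≠ j2 → ∀ a ∈ I j1, a ∉ I j2)
    (hx : x ∉ hUU I) (h : ∀ k, ¬ hPath v I x k) : False := by
  set Reach : ι → Prop := fun y =>
    ∃ k, ∃ p : ℕ → ι, p 0 = x ∧ p k = y ∧ ∀ t < k, hArc v I (p t) (p (t + 1)) with hR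
  set A : Finset ι := Finset.univ.filter Reach with hA
  have hxA : x ∈ A := by
    rw [hA, Finset.mem_filter]
    exact ⟨Finset.mem_univ _, 0, fun _ => x, rfl, rfl, by omega⟩
  have hclosed : ∀ y ∈ A, ∀ z, hArc v I y z → z ∈ A := by
    intro y hy z hyz
    rw [hA, Finset.mem_filter] at hy ⊢
    obtain ⟨-, k, p, hp0, hpk, hparc⟩ := hy
    refine ⟨Finset.mem_univ _, k + 1, fun t => if t = k + 1 then z else p t, ?_, ?_, ?_⟩
    · simp only [if_neg (by omega : ¬(0 = k + 1))]; exact hp0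
    · simp
    · intro t ht
      by_cases htk : t = k
      · subst htk
        simp only [if_neg (by omega : ¬(t = t + 1)), if_pos rfl]
        rw [hpk]; exact hyz
      · simp only [if_neg (by omega : ¬(t = k + 1)), if_neg (by omega : ¬(t + 1 = k + 1))]
        exact hparc t (by omega)
  have hnotfree : ∀ y ∈ A, ∀ j, v y ∈ hsp v (I j) := by
    intro y hy j
    by_contra hfr
    rw [hA, Finset.mem_filter] at hy
    obtain ⟨-, k, p, hp0, hpk, hparc⟩ := hy
    exact h k ⟨p, hp0, hparc, ⟨j, by rw [hpk]; exact hfr⟩⟩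
  have hspan : ∀ y ∈ A, ∀ j, v y ∈ hsp v (I j ∩ A) := by
    intro y hy j
    have hc := circuit_span (hind j) (hnotfree y hy j)
    refine hsp_mono ?_ hc
    intro z hz
    rw [Finset.mem_filter] at hz
    exact Finset.mem_inter.2 ⟨hz.1, hclosed y hy z ⟨j, hnotfree y hy j, hz.1, hz.2⟩⟩
  have hle : ∀ j, hsp v A ≤ hsp v (I j ∩ A) := by
    intro j
    rw [hsp, Submodule.span_le]
    rintro _ ⟨y, hy, rfl⟩
    exact hspan y (by exact_mod_cast hy) j
  have hcardge : ∀ j, Module.finrank ℚ (hsp v A) ≤ (I j ∩ A).card := by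
    intro j
    rw [hInd_card (hInd_mono Finset.inter_subset_left (hind j))]
    exact Submodule.finrank_mono (hle j)
  set B : Finset ι := Finset.univ.biUnion (fun j => I j ∩ A) with hB
  have hBsub : B ⊆ A.erase x := by
    intro a ha
    rw [hB, Finset.mem_biUnion] at ha
    obtain ⟨j, -, hj⟩ := ha
    rw [Finset.mem_inter] at hj
    exact Finset.mem_erase.2 ⟨fun hax => hx (mem_hUU.2 ⟨j, hax ▸ hj.1⟩), hj.2⟩
  have hBcard : B.card = ∑ j, (I j ∩ A).card := by
    rw [hB]
    apply Finset.card_biUnion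
    intro j1 _ j2 _ hne
    rw [Function.onFun, Finset.disjoint_left]
    intro a h1 h2
    exact hd j1 j2 hne a (Finset.mem_inter.1 h1).1 (Finset.mem_inter.1 h2).1
  have h1 : q * Module.finrank ℚ (hsp v A) ≤ B.card := by
    rw [hBcard]
    calc q * Module.finrank ℚ (hsp v A)
        = ∑ _j : Fin q, Module.finrank ℚ (hsp v A) := by
          rw [Finset.sum_const, Finset.card_univ, Fintype.card_fin, smul_eq_mul]
      _ ≤ ∑ j, (I j ∩ A).card := Finset.sum_le_sum (fun j _ => hcardge j)
  have h2 : B.card < A.card :=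
    lt_of_le_of_lt (Finset.card_le_card hBsub) (Finset.card_erase_lt_of_mem hxA)
  have h3 := HH A
  omega

open scoped Classical in
lemma horn_partition (HH : ∀ T : Finset ι, T.card ≤ q * Module.finrank ℚ (hsp v T))
    (S : Finset ι) :
    ∃ I : Fin q → Finset ι, (∀ j, hInd v (I j)) ∧
      (∀ j1 j2 : Fin q, j1 ≠ j2 → ∀ a ∈ I j1, a ∉ I j2) ∧ hUU I = S := by
  induction S using Finset.induction_on with
  | empty => exact ⟨fun _ => ∅, fun _ => hInd_empty, by simp, by ext a; simp [hUU]⟩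
  | @insert a S haS IH =>
    obtain ⟨I, h1, h2, h3⟩ := IH
    by_cases hp : ∃ k, hPath v I a k
    · obtain ⟨k, hk⟩ := hp
      obtain ⟨J, j1, j2, j3⟩ := augment k I a h1 h2 (h3 ▸ haS) hk
      exact ⟨J, j1, j2, by rw [j3, h3]⟩
    · push_neg at hp
      exact (no_path_contra HH I a h1 h2 (h3 ▸ haS) hp).elim

end Aug

end Horn

open scoped Classical in
/-- **Quasi-partitionable matrices.** If `M ∈ ℚ^{n×s}` is quasi-`q`-partitionable,
i.e. `s ≥ nq` and `μ(d; M) ≤ dq` for all `0 ≤ d < n`, then `M` has full rank `n`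
and every `n × nq` submatrix of `M` is `q`-partitionable. -/
theorem stmt3 (q n s : ℕ) (hq : 0 < q) (hn : 0 < n) (hs : 0 < s)
    (M : Matrix (Fin n) (Fin s) ℚ)
    (h1 : n * q ≤ s)
    (h2 : ∀ d : ℕ, d < n → ∀ T : Finset (Fin s),
        Module.finrank ℚ ↥(Submodule.span ℚ ((fun j i => M i j) '' ↑T)) ≤ d →
        T.card ≤ d * q) :
    M.rank = n ∧
    ∀ c : Fin (n * q) → Fin s, Function.Injective c →
      ∃ e : Fin q → Fin n → Fin (n * q),
        Function.Bijective (fun p : Fin q × Fin n => e p.1 p.2) ∧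
        ∀ b : Fin q, (Matrix.of fun i j => M i (c (e b j))).det ≠ 0 := by
  have hfinV : Module.finrank ℚ (Fin n → ℚ) = n := Module.finrank_fin_fun ℚ
  have hrank : M.rank = n := by
    rw [Matrix.rank_eq_finrank_span_cols]
    set d := Module.finrank ℚ (Submodule.span ℚ (Set.range M.transpose)) with hdd
    have hle : d ≤ n := by
      have := Submodule.finrank_le (Submodule.span ℚ (Set.range M.transpose))
      rwa [hfinV] at this
    by_contra hne
    have hlt : d < n := lt_of_le_of_ne hle hne
    have h2' := h2 d hlt Finset.univ (by
      have himg : ((fun j i => M i j) '' ↑(Finset.univ : Finset (Fin s))) = Set.range M.transpose := by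
        rw [Finset.coe_univ, Set.image_univ]; rfl
      rw [himg])
    rw [Finset.card_univ, Fintype.card_fin] at h2'
    have h4 : (d + 1) * q ≤ n * q := Nat.mul_le_mul_right q hlt
    rw [add_mul, one_mul] at h4
    omega
  refine ⟨hrank, ?_⟩
  intro c hc
  set v : Fin (n * q) → (Fin n → ℚ) := fun j i => M i (c j) with hv
  have HH : ∀ T : Finset (Fin (n * q)), T.card ≤ q * Module.finrank ℚ (hsp v T) := by
    intro T
    set d := Module.finrank ℚ (hsp v T) with hd
    by_cases hdn : d < n
    · have himg : ((fun j i => M i j) '' ↑(T.image c)) = v '' ↑T := by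
        rw [Finset.coe_image]
        exact Set.image_image _ _ _
      have h2' := h2 d hdn (T.image c) (by rw [himg]; exact le_of_eq hd.symm)
      rw [Finset.card_image_of_injective T hc] at h2'
      exact h2'.trans (le_of_eq (mul_comm d q))
    · push_neg at hdn
      calc T.card ≤ (Finset.univ : Finset (Fin (n * q))).card := Finset.card_le_univ T
        _ = n * q := by simp
        _ = q * n := mul_comm _ _
        _ ≤ q * d := Nat.mul_le_mul_left q hdn
  obtain ⟨I, hI1, hI2, hI3⟩ := horn_partition (v := v) HH Finset.univ
  have hcardle : ∀ b, (I b).card ≤ n := by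
    intro b
    rw [hInd_card (hI1 b)]
    have := Submodule.finrank_le (hsp v (I b))
    rwa [hfinV] at this
  have hdisjB : ∀ (j1 : Fin q), j1 ∈ Finset.univ → ∀ (j2 : Fin q), j2 ∈ Finset.univ →
      j1 ≠ j2 → Disjoint (I j1) (I j2) := by
    intro j1 _ j2 _ hne
    exact Finset.disjoint_left.2 (fun a ha1 ha2 => hI2 j1 j2 hne a ha1 ha2)
  have hsum : ∑ b, (I b).card = n * q := by
    calc ∑ b, (I b).card = (Finset.univ.biUnion I).card := (Finset.card_biUnion hdisjB).symm
      _ = (Finset.univ : Finset (Fin (n * q))).card := by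
          rw [show Finset.univ.biUnion I = hUU I from rfl, hI3]
      _ = n * q := by simp
  have hcardeq : ∀ b, (I b).card = n := by
    by_contra hcon
    push_neg at hcon
    obtain ⟨b₀, hb₀⟩ := hcon
    have hlt : (I b₀).card < n := lt_of_le_of_ne (hcardle b₀) hb₀
    have hstrict : ∑ b, (I b).card < ∑ _b : Fin q, n :=
      Finset.sum_lt_sum (fun b _ => hcardle b) ⟨b₀, Finset.mem_univ _, hlt⟩
    rw [hsum, Finset.sum_const, Finset.card_univ, Fintype.card_fin, smul_eq_mul,
      mul_comm] at hstrict
    exact lt_irrefl _ hstrict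
  have hce : ∀ b, Fintype.card { x // x ∈ I b } = n := by
    intro b
    rw [Fintype.card_coe]
    exact hcardeq b
  let eb : ∀ b : Fin q, Fin n ≃ { x // x ∈ I b } := fun b => (Fintype.equivFinOfCardEq (hce b)).symm
  refine ⟨fun b j => (eb b j : Fin (n * q)), ⟨?_, ?_⟩, ?_⟩
  · rintro ⟨b, j⟩ ⟨b', j'⟩ hEq
    simp only at hEq
    have hm : ((eb b j : Fin (n * q))) ∈ I b := (eb b j).2
    have hm' : ((eb b' j' : Fin (n * q))) ∈ I b' := (eb b' j').2
    by_cases hbb : b = b'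
    · subst hbb
      rw [Prod.mk.injEq]
      exact ⟨rfl, (eb _).injective (Subtype.ext hEq)⟩
    · exact absurd hm' (hI2 b b' hbb _ (hEq ▸ hm))
  · intro y
    have hy : y ∈ hUU I := by rw [hI3]; exact Finset.mem_univ y
    obtain ⟨b, hb⟩ := mem_hUU.1 hy
    exact ⟨(b, (eb b).symm ⟨y, hb⟩), by simp⟩
  · intro b
    have hli : LinearIndependent ℚ (fun j : Fin n => v ((eb b j : Fin (n * q)))) := by
      have hginj : Function.Injective
          (fun j : Fin n => (⟨(eb b j : Fin (n * q)), (eb b j).2⟩ :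
            ((I b : Finset (Fin (n * q))) : Set (Fin (n * q))))) := by
        intro j j' h
        apply (eb b).injective
        apply Subtype.coe_injective
        exact congrArg Subtype.val h
      exact (hI1 b).comp _ hginj
    have hcols : LinearIndependent ℚ
        (fun j => (Matrix.of fun i j' => M i (c ((eb b j' : Fin (n * q))))).transpose j) := hli
    have hunit := Matrix.linearIndependent_cols_iff_isUnit.mp hcols
    exact ((Matrix.isUnit_iff_isUnit_det _).mp hunit).ne_zero
end

section
/- Let d, h, M ∈ ℕ and 0 < ρ ≤ 1. There exists M₁ = M₁(ρ, d, h, M) ∈ ℕ such that the following holds: if S ⊆ ℕ is multiplicatively [M]-syndetic and α ∈ 𝕋^d, then S ∩ B_h(α, ρ) is multiplicatively [M₁]-syndetic, where B_h(α, ρ) = ⋂_{i=1}^d {n ∈ ℕ : ‖n^h α_i‖ < ρ}. -/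
open Finset Function Nat fwdDiff

def MultSyndetic (M : ℕ) (S : Set ℕ) : Prop :=
  ∀ x : ℕ, 0 < x → ∃ m : ℕ, 1 ≤ m ∧ m ≤ M ∧ m * x ∈ S


lemma fd_pow_step (a m : ℕ) : Δ_[a] (fun x : ℕ ↦ (x:ℝ)^m) =
    ∑ j ∈ range m, (m.choose j * (a:ℝ)^(m-j)) • (fun x : ℕ ↦ (x:ℝ)^j) := by
  funext x
  simp only [fwdDiff, Finset.sum_apply, Pi.smul_apply, smul_eq_mul]
  push_cast
  rw [add_pow, Finset.sum_range_succ]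
  simp [mul_comm, mul_assoc, mul_left_comm]

lemma fd_zero_fun (a : ℕ) (n : ℕ) : (fwdDiff a)^[n] (fun _ : ℕ ↦ (0:ℝ)) = fun _ ↦ 0 := by
  induction n with
  | zero => rfl
  | succ n IH => rw [iterate_succ_apply, fwdDiff_const, IH]

lemma fd_pow_lt (a : ℕ) : ∀ n m : ℕ, m < n → (fwdDiff a)^[n] (fun x : ℕ ↦ (x:ℝ)^m) = fun _ ↦ 0 := by
  intro n
  induction n with
  | zero => omega
  | succ n IH =>
    intro m hm
    rw [iterate_succ_apply, fd_pow_step, fwdDiff_iter_finset_sum]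
    funext x
    simp only [Finset.sum_apply]
    refine Finset.sum_eq_zero fun j hj => ?_
    rw [fwdDiff_iter_const_smul, IH j (by simp at hj; omega)]
    simp

lemma fd_pow_self (a : ℕ) : ∀ n : ℕ, (fwdDiff a)^[n] (fun x : ℕ ↦ (x:ℝ)^n) = fun _ ↦ ((n !) : ℝ) * (a:ℝ)^n := by
  intro n
  induction n with
  | zero => funext x; simp
  | succ n IH =>
    rw [iterate_succ_apply, fd_pow_step, fwdDiff_iter_finset_sum, Finset.sum_range_succ]
    funext x
    simp only [Finset.sum_apply, Pi.add_apply]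
    rw [Finset.sum_eq_zero fun j hj => ?_]
    · rw [fwdDiff_iter_const_smul]
      simp only [Pi.smul_apply, IH, smul_eq_mul]
      rw [Nat.choose_succ_self_right]
      push_cast [Nat.factorial_succ]
      rw [show n+1-n = 1 by omega]
      ring
    · rw [fwdDiff_iter_const_smul, fd_pow_lt a n j (by simp at hj; omega)]
      simp




lemma diff_const_zero (a b n : ℕ) (hn : 0 < n) (c : ℝ) :
    ∑ k ∈ range (n+1), (((-1:ℤ)^(n-k) * n.choose k) • c) = 0 := by
  have H := fwdDiff_iter_eq_sum_shift (M := ℕ) (G := ℝ) a (fun _ : ℕ ↦ c) n b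
  obtain ⟨n', rfl⟩ := Nat.exists_eq_succ_of_ne_zero hn.ne'
  rw [iterate_succ_apply, fwdDiff_const, fd_zero_fun] at H
  simpa using H.symm

lemma diff_identity (a b h : ℕ) (β : ℝ) :
    ∑ k ∈ range (h+1), (((-1:ℤ)^(h-k) * h.choose k) • (((b + k*a : ℕ):ℝ)^h * β)) =
      ((h !) : ℝ) * (a:ℝ)^h * β := by
  have H := fwdDiff_iter_eq_sum_shift (M := ℕ) (G := ℝ) a (β • fun x : ℕ ↦ (x:ℝ)^h) h b
  rw [fwdDiff_iter_const_smul, fd_pow_self] at H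
  simp only [Pi.smul_apply, smul_eq_mul] at H
  rw [show ((h !) : ℝ) * (a:ℝ)^h * β = β * (((h !) : ℝ) * (a:ℝ)^h) by ring, H]
  refine Finset.sum_congr rfl fun k hk => ?_
  simp only [zsmul_eq_mul, smul_eq_mul]
  push_cast
  ring

lemma fract_close {r : ℕ} (hr : 0 < r) (p q : ℝ) (hp : 0 ≤ p) (hq : 0 ≤ q)
    (hfl : ⌊p * r⌋₊ = ⌊q * r⌋₊) : |p - q| < 1 / r := by
  have h1 : (⌊p * r⌋₊ : ℝ) ≤ p * r := Nat.floor_le (by positivity)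
  have h2 : p * r < ⌊p * r⌋₊ + 1 := Nat.lt_floor_add_one _
  have h3 : (⌊q * r⌋₊ : ℝ) ≤ q * r := Nat.floor_le (by positivity)
  have h4 : q * r < ⌊q * r⌋₊ + 1 := Nat.lt_floor_add_one _
  rw [hfl] at h1 h2
  have hrr : (0:ℝ) < r := by exact_mod_cast hr
  rw [abs_sub_lt_iff]
  constructor <;> rw [lt_div_iff₀ hrr] <;> nlinarith

lemma lemA (d h : ℕ) (hh : 0 < h) (δ : ℝ) (hδ : 0 < δ) (β : Fin d → ℝ) :
    ∃ a : ℕ, 0 < a ∧ ∀ i, ∃ z : ℤ, |((h !) : ℝ) * (a:ℝ)^h * β i - z| < δ := by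
  obtain ⟨r, hr0, hrδ⟩ : ∃ r : ℕ, 0 < r ∧ (2:ℝ)^h / r < δ := by
    refine ⟨⌈(2:ℝ)^h / δ⌉₊ + 1, Nat.succ_pos _, ?_⟩
    have h1 : (2:ℝ)^h / δ < ((⌈(2:ℝ)^h / δ⌉₊ + 1 : ℕ) : ℝ) := by
      push_cast
      exact lt_of_le_of_lt (Nat.le_ceil _) (by linarith)
    rw [div_lt_iff₀ (by positivity)]
    rw [div_lt_iff₀ hδ] at h1
    nlinarith
  set C : ℕ → (Fin d → Fin r) := fun n i =>
    ⟨⌊Int.fract ((n:ℝ)^h * β i) * r⌋₊, by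
      rw [Nat.floor_lt (mul_nonneg (Int.fract_nonneg _) (Nat.cast_nonneg _))]
      calc Int.fract ((n:ℝ)^h * β i) * r < 1 * r :=
            mul_lt_mul_of_pos_right (Int.fract_lt_one _) (by exact_mod_cast hr0)
        _ = r := one_mul _⟩ with hC
  obtain ⟨a, ha, b, c, hc⟩ := Combinatorics.exists_mono_homothetic_copy (Finset.range (h+1)) C
  refine ⟨a, ha, fun i => ?_⟩
  set u : ℕ → ℝ := fun k => (((b + k*a : ℕ)):ℝ)^h * β i with hu
  have key : ∀ k, ∃ zz : ℤ, k ∈ range (h+1) → |u k - u 0 - zz| < 1 / r := by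
    intro k
    refine ⟨⌊u k⌋ - ⌊u 0⌋, fun hk => ?_⟩
    have heq : u k - u 0 - ((⌊u k⌋ - ⌊u 0⌋ : ℤ) : ℝ) = Int.fract (u k) - Int.fract (u 0) := by
      unfold Int.fract; push_cast; ring
    rw [heq]
    apply fract_close hr0 _ _ (Int.fract_nonneg _) (Int.fract_nonneg _)
    have e3 : C (a • k + b) i = C (a • 0 + b) i := by rw [hc k hk, hc 0 (by simp)]
    have e4 : (C (a • k + b) i).val = (C (a • 0 + b) i).val := by rw [e3]
    simpa [hC, hu, smul_eq_mul, show a * k + b = b + k * a by ring,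
      show a * 0 + b = b + 0 * a by ring] using e4
  choose z hz using key
  have hsum := diff_identity a b h (β i)
  set Z : ℤ := ∑ k ∈ range (h+1), (-1:ℤ)^(h-k) * h.choose k * z k with hZ
  refine ⟨Z, ?_⟩
  have c0 := diff_const_zero a b h hh (u 0)
  have split : ∑ k ∈ range (h+1), (((-1:ℤ)^(h-k) * (h.choose k : ℤ)) : ℝ) * (u k - u 0 - z k)
      = (∑ k ∈ range (h+1), (((-1:ℤ)^(h-k) * h.choose k) • u k))
        - (∑ k ∈ range (h+1), (((-1:ℤ)^(h-k) * h.choose k) • u 0))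
        - ((Z : ℝ)) := by
    rw [hZ]
    push_cast
    rw [← Finset.sum_sub_distrib, ← Finset.sum_sub_distrib]
    refine Finset.sum_congr rfl fun k hk => ?_
    simp only [zsmul_eq_mul]
    push_cast
    ring
  have e1 : ((h !) : ℝ) * (a:ℝ)^h * β i - Z
      = ∑ k ∈ range (h+1), (((-1:ℤ)^(h-k) * (h.choose k : ℤ)) : ℝ) * (u k - u 0 - z k) := by
    rw [split, c0, hsum]; ring
  rw [e1]
  calc |∑ k ∈ range (h+1), (((-1:ℤ)^(h-k) * (h.choose k : ℤ)) : ℝ) * (u k - u 0 - z k)|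
      ≤ ∑ k ∈ range (h+1), |(((-1:ℤ)^(h-k) * (h.choose k : ℤ)) : ℝ) * (u k - u 0 - z k)| :=
        Finset.abs_sum_le_sum_abs _ _
    _ ≤ ∑ k ∈ range (h+1), (h.choose k : ℝ) * (1/r) := by
        refine Finset.sum_le_sum fun k hk => ?_
        rw [abs_mul]
        have hco : |(((-1:ℤ)^(h-k) * (h.choose k : ℤ)) : ℝ)| = (h.choose k : ℝ) := by
          push_cast
          rw [abs_mul, abs_pow, abs_neg, abs_one, one_pow, one_mul, abs_of_nonneg (by positivity)]
        rw [hco]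
        exact mul_le_mul_of_nonneg_left (le_of_lt (hz k hk)) (Nat.cast_nonneg _)
    _ = (2:ℝ)^h / r := by
        rw [← Finset.sum_mul]
        rw [show ∑ k ∈ range (h+1), (h.choose k : ℝ) = ((∑ k ∈ range (h+1), h.choose k : ℕ) : ℝ) by push_cast; rfl]
        rw [Nat.sum_range_choose]
        push_cast
        ring
    _ < δ := hrδ




lemma lemB (d h : ℕ) (hh : 0 < h) (δ : ℝ) (hδ : 0 < δ) (β : Fin d → ℝ) :
    ∃ k : ℕ, 0 < k ∧ ∀ i, ∃ z : ℤ, |((k:ℝ))^h * β i - z| < δ := by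
  obtain ⟨a, ha, hA⟩ := lemA d h hh δ hδ (fun i => ((h !) : ℝ)^(h-1) * β i)
  refine ⟨h ! * a, Nat.mul_pos (Nat.factorial_pos h) ha, fun i => ?_⟩
  obtain ⟨z, hzz⟩ := hA i
  refine ⟨z, ?_⟩
  have heq : (((h ! * a : ℕ)):ℝ)^h * β i
      = ((h !) : ℝ) * (a:ℝ)^h * (((h !) : ℝ)^(h-1) * β i) := by
    push_cast
    have hp : ∀ c : ℝ, c^h = c * c^(h-1) := by
      intro c
      conv_lhs => rw [show h = h - 1 + 1 by omega]
      rw [pow_succ]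
      ring
    rw [mul_pow, hp]
    ring
  rw [heq]; exact hzz

lemma lemC (d h : ℕ) (hh : 0 < h) (δ : ℝ) (hδ : 0 < δ) :
    ∃ K : ℕ, 0 < K ∧ ∀ β : Fin d → ℝ, ∃ k : ℕ, 0 < k ∧ k ≤ K ∧
      ∀ i, ∃ z : ℤ, |((k:ℝ))^h * β i - z| < δ := by
  set U : ℕ → Set (Fin d → ℝ) := fun k =>
    {β | ∀ i, ∃ z : ℤ, |(((k+1:ℕ)):ℝ)^h * β i - z| < δ} with hU
  have hopen : ∀ k, IsOpen (U k) := by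
    intro k
    have hrw : U k = ⋂ i : Fin d, ⋃ z : ℤ,
        {β : Fin d → ℝ | |(((k+1:ℕ)):ℝ)^h * β i - z| < δ} := by
      ext β; simp [hU]
    rw [hrw]
    refine isOpen_iInter_of_finite fun i => isOpen_iUnion fun z => ?_
    have hcont : Continuous fun β : Fin d → ℝ => |(((k+1:ℕ)):ℝ)^h * β i - (z:ℝ)| := by
      apply Continuous.abs; continuity
    simpa using isOpen_lt hcont continuous_const
  have hcover : (Set.Icc (0 : Fin d → ℝ) 1) ⊆ ⋃ k : ℕ, U k := by
    intro β _
    obtain ⟨k, hk, hB⟩ := lemB d h hh δ hδ β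
    refine Set.mem_iUnion.2 ⟨k - 1, ?_⟩
    show ∀ i, ∃ z : ℤ, |(((k-1+1:ℕ)):ℝ)^h * β i - (z:ℝ)| < δ
    rw [Nat.sub_add_cancel hk]
    exact hB
  obtain ⟨t, ht⟩ := (isCompact_Icc (a := (0:Fin d → ℝ)) (b := 1)).elim_finite_subcover
    U hopen hcover
  refine ⟨(t.sup id) + 1, Nat.succ_pos _, fun β => ?_⟩
  have hfr : (fun i => Int.fract (β i)) ∈ Set.Icc (0 : Fin d → ℝ) 1 := by
    rw [Set.mem_Icc]
    constructor <;> intro i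
    · exact Int.fract_nonneg _
    · exact le_of_lt (Int.fract_lt_one _)
  have := ht hfr
  rw [Set.mem_iUnion₂] at this
  obtain ⟨k, hkt, hkU⟩ := this
  refine ⟨k + 1, Nat.succ_pos _, by
    have : k ≤ t.sup id := Finset.le_sup (f := id) hkt
    omega, fun i => ?_⟩
  obtain ⟨z, hzz⟩ := hkU i
  refine ⟨z + (((k+1)^h : ℕ) : ℤ) * ⌊β i⌋, ?_⟩
  have heq : (((k+1:ℕ)):ℝ)^h * β i - ((z + (((k+1)^h : ℕ) : ℤ) * ⌊β i⌋ : ℤ) : ℝ)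
      = (((k+1:ℕ)):ℝ)^h * Int.fract (β i) - z := by
    rw [Int.fract]
    push_cast
    ring
  rw [heq]
  exact hzz


/-- **Syndeticity for Bohr–syndetic intersections.** For `d, h, M ∈ ℕ` and
`0 < ρ ≤ 1` there is `M₁ = M₁(ρ,d,h,M)` such that whenever `S` is multiplicatively
`[M]`-syndetic and `α ∈ 𝕋^d`, the set `S ∩ B_h(α,ρ)` is multiplicatively
`[M₁]`-syndetic, where `B_h(α,ρ) = ⋂_{i=1}^d {n : ‖n^h α_i‖ < ρ}`. -/
theorem stmt6 (d h M : ℕ) (hd : 0 < d) (hh : 0 < h) (hM : 0 < M)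
    (ρ : ℝ) (hρ0 : 0 < ρ) (hρ1 : ρ ≤ 1) :
    ∃ M₁ : ℕ, 0 < M₁ ∧ ∀ (S : Set ℕ), MultSyndetic M S → ∀ α : Fin d → ℝ,
      MultSyndetic M₁
        (S ∩ {n : ℕ | ∀ i : Fin d, ∃ z : ℤ, |((n : ℝ) ^ h * α i - z)| < ρ}) := by

  have hMh : (0:ℝ) < (M:ℝ)^h := by positivity
  obtain ⟨K, hK0, hK⟩ := lemC d h hh (ρ / (M:ℝ)^h) (by positivity)
  refine ⟨M * K, Nat.mul_pos hM hK0, fun S hS α x hx => ?_⟩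
  obtain ⟨k, hk0, hkK, hB⟩ := hK (fun i => ((x:ℝ))^h * α i)
  obtain ⟨m, hm1, hmM, hmS⟩ := hS (k * x) (Nat.mul_pos hk0 hx)
  refine ⟨m * k, Nat.one_le_iff_ne_zero.2 (by positivity), Nat.mul_le_mul hmM hkK, ?_, ?_⟩
  · show m * k * x ∈ S
    rwa [mul_assoc]
  · intro i
    obtain ⟨z, hz⟩ := hB i
    refine ⟨(m:ℤ)^h * z, ?_⟩
    have heq : ((m * k * x : ℕ) : ℝ)^h * α i - (((m:ℤ)^h * z : ℤ) : ℝ)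
        = (m:ℝ)^h * ((k:ℝ)^h * (((x:ℝ))^h * α i) - z) := by
      push_cast
      ring
    rw [heq, abs_mul, abs_of_nonneg (by positivity)]
    have hmpos : (0:ℝ) < (m:ℝ)^h := by
      have : (0:ℕ) < m := hm1
      positivity
    calc (m:ℝ)^h * |(k:ℝ)^h * (((x:ℝ))^h * α i) - z|
        < (m:ℝ)^h * (ρ / (M:ℝ)^h) := by
          exact mul_lt_mul_of_pos_left hz hmpos
      _ ≤ (M:ℝ)^h * (ρ / (M:ℝ)^h) := by
          apply mul_le_mul_of_nonneg_right _ (by positivity)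
          exact pow_le_pow_left₀ (by positivity) (by exact_mod_cast hmM) h
      _ = ρ := by field_simp
end

section
/- Let M ∈ ℤ^{h×k} be a matrix of rank h satisfying: for every nonzero vector v = (v_1,...,v_k) in the row space of M, there exists a nonempty set J ⊆ {1,...,k} with v_j ≠ 0 for all j ∈ J and ∑_{j∈J} v_j = 0. Suppose also M obeys the columns condition. Then M is equivalent (under column permutations and elementary row operations) to a block matrix of the form [[A, B],[0, C]] where A ∈ ℤ^{n×s} has rank n and columns summing to the zero vector, and C ∈ ℤ^{m×t} obeys the columns condition (with h = n+m, k = s+t, n, s ≥ 1, m, t ≥ 0). -/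
open Finset

/-- A matrix `M ∈ ℤ^{h×k}` obeys Rado's **columns condition** if its column index
set can be partitioned into nonempty blocks `J_0, …, J_{p-1}` such that the columns
in `J_0` sum to zero and, for each later block, the sum of its columns lies in the
`ℚ`-linear span of the columns in all earlier blocks. -/
def ColumnsCondition {h k : ℕ} (M : Matrix (Fin h) (Fin k) ℤ) : Prop :=
  ∃ (p : ℕ) (J : Fin p → Finset (Fin k)),
    (∀ i₁ i₂ : Fin p, i₁ ≠ i₂ → Disjoint (J i₁) (J i₂)) ∧
    (Finset.univ.biUnion J = Finset.univ) ∧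
    (∀ i, (J i).Nonempty) ∧
    (∀ i : Fin p, (i : ℕ) = 0 →
      ∑ j ∈ J i, (fun r : Fin h => (M r j : ℚ)) = 0) ∧
    (∀ i : Fin p, 0 < (i : ℕ) →
      (∑ j ∈ J i, fun r : Fin h => (M r j : ℚ)) ∈
        Submodule.span ℚ ((fun j : Fin k => fun r : Fin h => (M r j : ℚ)) ''
          {j : Fin k | ∃ i' : Fin p, (i' : ℕ) < (i : ℕ) ∧ j ∈ J i'}))

private lemma ratden (q : ℚ) : (q.den : ℚ) * q = q.num := by
  rw [mul_comm]; exact Rat.mul_den_eq_num q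

private lemma L1 {h k : ℕ} (M : Matrix (Fin h) (Fin k) ℤ) (hcc : ColumnsCondition M)
    (hnz : ∃ r j, (M r j : ℚ) ≠ 0) :
    ∃ Jset : Finset (Fin k),
      (∃ j ∈ Jset, ∃ r, (M r j : ℚ) ≠ 0) ∧
      (∑ j ∈ Jset, (fun r : Fin h => (M r j : ℚ))) = 0 ∧
      ∃ (p' : ℕ) (J' : Fin p' → Finset (Fin k)),
        (∀ a₁ a₂ : Fin p', a₁ ≠ a₂ → Disjoint (J' a₁) (J' a₂)) ∧
        (∀ a, (J' a).Nonempty) ∧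
        (Finset.univ.biUnion J' = Jsetᶜ) ∧
        (∀ a : Fin p',
          (∑ j ∈ J' a, fun r : Fin h => (M r j : ℚ)) ∈
            Submodule.span ℚ ((fun j : Fin k => fun r : Fin h => (M r j : ℚ)) ''
              (↑Jset ∪ {j : Fin k | ∃ a' : Fin p', a' < a ∧ j ∈ J' a'}))) := by
  classical
  obtain ⟨p, J, hdisj, hcover, hne, hzero, hspan⟩ := hcc
  -- the predicate: block i contains a nonzero column
  set Q : ℕ → Prop := fun i => ∃ hi : i < p, ∃ j ∈ J ⟨i, hi⟩, ∃ r, (M r j : ℚ) ≠ 0 with hQ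
  have hQex : ∃ i, Q i := by
    obtain ⟨r, j, hj⟩ := hnz
    have : j ∈ Finset.univ.biUnion J := by rw [hcover]; exact mem_univ j
    obtain ⟨i, -, hji⟩ := mem_biUnion.mp this
    exact ⟨i, i.isLt, j, hji, r, hj⟩
  set q := Nat.find hQex with hqdef
  obtain ⟨hqp, j₀, hj₀, r₀, hr₀⟩ : Q q := Nat.find_spec hQex
  have hmin : ∀ i : Fin p, (i : ℕ) < q → ∀ j ∈ J i, ∀ r, (M r j : ℚ) = 0 := by
    intro i hi j hj r
    by_contra hne'
    exact Nat.find_min hQex hi ⟨i.isLt, j, by simpa using hj, r, hne'⟩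
  -- columns in blocks < q are zero functions
  have hzerocol : ∀ i : Fin p, (i : ℕ) < q → ∀ j ∈ J i,
      (fun r : Fin h => (M r j : ℚ)) = 0 := by
    intro i hi j hj; funext r; exact hmin i hi j hj r
  -- block sums are zero for i ≤ q
  have hblocksum : ∀ i : Fin p, (i : ℕ) ≤ q →
      (∑ j ∈ J i, fun r : Fin h => (M r j : ℚ)) = 0 := by
    intro i hi
    rcases Nat.eq_zero_or_pos (i : ℕ) with h0 | h0
    · exact hzero i h0
    · have := hspan i h0
      have hsub : ((fun j : Fin k => fun r : Fin h => (M r j : ℚ)) ''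
          {j : Fin k | ∃ i' : Fin p, (i' : ℕ) < (i : ℕ) ∧ j ∈ J i'}) ⊆ {0} := by
        rintro _ ⟨j, ⟨i', hi', hji'⟩, rfl⟩
        exact hzerocol i' (lt_of_lt_of_le hi' hi) j hji'
      have := Submodule.span_mono hsub this
      rwa [Submodule.span_zero_singleton, Submodule.mem_bot] at this
  set Jset : Finset (Fin k) := (Finset.univ.filter (fun i : Fin p => (i : ℕ) ≤ q)).biUnion J
    with hJset
  have hmemJset : ∀ j : Fin k, j ∈ Jset ↔ ∃ i : Fin p, (i : ℕ) ≤ q ∧ j ∈ J i := by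
    intro j
    simp [hJset, mem_biUnion]
  refine ⟨Jset, ⟨j₀, (hmemJset j₀).mpr ⟨⟨q, hqp⟩, le_refl _, hj₀⟩, r₀, hr₀⟩, ?_, ?_⟩
  · -- total sum zero
    rw [Finset.sum_biUnion]
    · apply Finset.sum_eq_zero
      intro i hi
      exact hblocksum i (by simpa using hi)
    · intro i hi i' hi' hne'
      exact hdisj i i' hne'
  · -- remaining blocks
    refine ⟨p - (q+1), fun a => J ⟨q + 1 + a, ?_⟩, ?_, ?_, ?_, ?_⟩
    · omega
    · intro a₁ a₂ hne'
      apply hdisj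
      simp only [ne_eq, Fin.mk.injEq]
      intro hcon; apply hne'; exact Fin.ext (by omega)
    · intro a; exact hne _
    · ext j
      simp only [mem_biUnion, mem_univ, true_and, mem_compl]
      constructor
      · rintro ⟨a, hja⟩
        rw [hmemJset]
        rintro ⟨i, hi, hji⟩
        have : i ≠ ⟨q + 1 + a, by omega⟩ := by
          intro hcon; rw [hcon] at hi; simp at hi; omega
        exact (Finset.disjoint_left.mp (hdisj _ _ this) hji) hja
      · intro hj
        have : j ∈ Finset.univ.biUnion J := by rw [hcover]; exact mem_univ j
        obtain ⟨i, -, hji⟩ := mem_biUnion.mp this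
        have hgt : q < (i : ℕ) := by
          by_contra hle
          exact hj ((hmemJset j).mpr ⟨i, by omega, hji⟩)
        refine ⟨⟨(i : ℕ) - (q+1), by omega⟩, ?_⟩
        have : (⟨q + 1 + ((i : ℕ) - (q+1)), by omega⟩ : Fin p) = i := Fin.ext (by simp; omega)
        rw [this]; exact hji
    · intro a
      have hpos : 0 < ((⟨q + 1 + a, by omega⟩ : Fin p) : ℕ) := by simp
      have := hspan _ hpos
      refine Submodule.span_mono ?_ this
      apply Set.image_mono
      rintro j ⟨i', hi', hji'⟩
      simp only [Set.mem_union, Set.mem_setOf_eq, Finset.coe_filter]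
      rcases le_or_gt (i' : ℕ) q with hle | hgt
      · left; exact (hmemJset j).mpr ⟨i', hle, hji'⟩
      · right
        have hi'' : (i' : ℕ) < q + 1 + (a : ℕ) := by simpa using hi'
        refine ⟨⟨(i' : ℕ) - (q+1), by omega⟩, ?_, ?_⟩
        · rw [Fin.lt_def]; simp; omega
        · have : (⟨q + 1 + ((i' : ℕ) - (q+1)), by omega⟩ : Fin p) = i' := Fin.ext (by simp; omega)
          rw [this]; exact hji'

private lemma L2 {k : ℕ} (Jset : Finset (Fin k)) :
    ∃ (s t : ℕ) (_ : k = s + t) (ε : (Fin s ⊕ Fin t) ≃ Fin k),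
      s = Jset.card ∧ (∀ a, ε (.inl a) ∈ Jset) ∧ (∀ b, ε (.inr b) ∉ Jset) := by
  classical
  set s := Jset.card with hs
  set t := Jsetᶜ.card with ht
  have hcompl : Jsetᶜ.card = k - s := by
    rw [Finset.card_compl, Fintype.card_fin]
  have hsk : s ≤ k := by
    simpa using Finset.card_le_card (Finset.subset_univ Jset)
  have hst : k = s + t := by omega
  set g1 := Jset.orderIsoOfFin (rfl : Jset.card = s)
  set g2 := Jsetᶜ.orderIsoOfFin (rfl : Jsetᶜ.card = t)
  set f : Fin s ⊕ Fin t → Fin k := Sum.elim (fun a => (g1 a : Fin k)) (fun b => (g2 b : Fin k))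
    with hf
  have hinj : Function.Injective f := by
    rintro (a₁ | b₁) (a₂ | b₂) hEq <;> simp only [hf, Sum.elim_inl, Sum.elim_inr] at hEq
    · have := Subtype.ext hEq
      simp only [EmbeddingLike.apply_eq_iff_eq] at this
      rw [this]
    · exact absurd ((g1 a₁).2) (by rw [hEq]; exact Finset.mem_compl.mp (g2 b₂).2)
    · exact absurd ((g1 a₂).2) (by rw [← hEq]; exact Finset.mem_compl.mp (g2 b₁).2)
    · have := Subtype.ext hEq
      simp only [EmbeddingLike.apply_eq_iff_eq] at this
      rw [this]
  have hbij : Function.Bijective f := by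
    rw [Fintype.bijective_iff_injective_and_card]
    refine ⟨hinj, by simp [hst]⟩
  exact ⟨s, t, hst, Equiv.ofBijective f hbij, rfl,
    fun a => (g1 a).2, fun b => Finset.mem_compl.mp (g2 b).2⟩



lemma L3 {h k : ℕ} (Mq : Matrix (Fin h) (Fin k) ℚ) (Jset : Finset (Fin k))
    (hnzcol : ∃ j ∈ Jset, ∃ r, Mq r j ≠ 0) :
    ∃ (n m : ℕ) (hnm : h = n + m) (R : Matrix (Fin h) (Fin h) ℚ),
      0 < n ∧ IsUnit R ∧
      (∀ r j, ∃ z : ℤ, (z : ℚ) = (R * Mq) r j) ∧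
      (∀ i : Fin m, ∀ j ∈ Jset,
        (R * Mq) (((finCongr hnm).trans finSumFinEquiv.symm).symm (.inr i)) j = 0) ∧
      LinearIndependent ℚ (fun i : Fin n => fun j : {x // x ∈ Jset} =>
        (R * Mq) (((finCongr hnm).trans finSumFinEquiv.symm).symm (.inl i)) (j : Fin k)) := by
  classical
  set ψ : (Fin h → ℚ) →ₗ[ℚ] ({x // x ∈ Jset} → ℚ) :=
    (LinearMap.funLeft ℚ ℚ (Subtype.val : {x // x ∈ Jset} → Fin k)).comp Mq.vecMulLinear
    with hψ
  have hψapp : ∀ (x : Fin h → ℚ) (j : {x // x ∈ Jset}), ψ x j = Mq.vecMul x (j : Fin k) := by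
    intro x j; rfl
  set K := LinearMap.ker ψ with hK
  obtain ⟨K', hcompl⟩ := K.exists_isCompl
  set m := Module.finrank ℚ K with hm
  set n := Module.finrank ℚ K' with hn
  have hnm : h = n + m := by
    have := Submodule.finrank_add_eq_of_isCompl hcompl.symm
    simp only [Module.finrank_pi, Fintype.card_fin] at this
    omega
  set bK : Module.Basis (Fin m) ℚ K := Module.finBasis ℚ K
  set bK' : Module.Basis (Fin n) ℚ K' := Module.finBasis ℚ K'
  set base : Fin n ⊕ Fin m → (Fin h → ℚ) :=
    Sum.elim (fun i => (bK' i : Fin h → ℚ)) (fun i => (bK i : Fin h → ℚ)) with hbase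
  set d : Fin n ⊕ Fin m → ℚ := fun x => ∏ j : Fin k, ((Mq.vecMul (base x)) j).den with hd
  have hdnz : ∀ x, d x ≠ 0 := by
    intro x
    simp only [hd]
    rw [← Nat.cast_prod]
    exact_mod_cast Finset.prod_ne_zero_iff.mpr (fun j _ => (Mq.vecMul (base x) j).den_nz)
  set du : Fin n ⊕ Fin m → ℚˣ := fun x => Units.mk0 (d x) (hdnz x) with hdu
  set body : Fin n ⊕ Fin m → (Fin h → ℚ) := fun x => d x • base x with hbody
  set rE : Fin h ≃ (Fin n ⊕ Fin m) := (finCongr hnm).trans finSumFinEquiv.symm with hrE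
  set R : Matrix (Fin h) (Fin h) ℚ := Matrix.of (fun r x => body (rE r) x) with hR
  have hrowP : ∀ r j, (R * Mq) r j = Mq.vecMul (body (rE r)) j := by
    intro r j
    simp [Matrix.mul_apply, Matrix.vecMul, dotProduct, hR]
  -- membership facts
  have hbaseK' : ∀ i : Fin n, base (.inl i) ∈ K' := fun i => (bK' i).2
  have hbaseK : ∀ i : Fin m, base (.inr i) ∈ K := fun i => (bK i).2
  have hbodyK' : ∀ i : Fin n, body (.inl i) ∈ K' := fun i =>
    K'.smul_mem _ (hbaseK' i)
  have hbodyK : ∀ i : Fin m, body (.inr i) ∈ K := fun i =>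
    K.smul_mem _ (hbaseK i)
  -- linear independence of base
  have hindep1 : LinearIndependent ℚ (fun i : Fin n => (bK' i : Fin h → ℚ)) := by
    have := bK'.linearIndependent
    exact this.map' K'.subtype K'.ker_subtype
  have hindep2 : LinearIndependent ℚ (fun i : Fin m => (bK i : Fin h → ℚ)) := by
    have := bK.linearIndependent
    exact this.map' K.subtype K.ker_subtype
  have hspan1 : Submodule.span ℚ (Set.range (fun i : Fin n => (bK' i : Fin h → ℚ))) = K' := by
    have : Set.range (fun i : Fin n => (bK' i : Fin h → ℚ)) =
        K'.subtype '' (Set.range bK') := by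
      rw [← Set.range_comp]; rfl
    rw [this, Submodule.span_image, bK'.span_eq, Submodule.map_top, Submodule.range_subtype]
  have hspan2 : Submodule.span ℚ (Set.range (fun i : Fin m => (bK i : Fin h → ℚ))) = K := by
    have : Set.range (fun i : Fin m => (bK i : Fin h → ℚ)) =
        K.subtype '' (Set.range bK) := by
      rw [← Set.range_comp]; rfl
    rw [this, Submodule.span_image, bK.span_eq, Submodule.map_top, Submodule.range_subtype]
  have hindepbase : LinearIndependent ℚ base := by
    apply hindep1.sum_type hindep2
    rw [hspan1, hspan2]
    exact hcompl.disjoint.symm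
  have hindepbody : LinearIndependent ℚ body := by
    have h2 := hindepbase.units_smul du
    have heq : (du • base) = body := by
      funext x; rfl
    rwa [heq] at h2
  have hindeprows : LinearIndependent ℚ (fun r : Fin h => R r) := by
    have : (fun r : Fin h => R r) = body ∘ ⇑rE := rfl
    rw [this]
    exact hindepbody.comp _ rE.injective
  have hunit : IsUnit R := Matrix.linearIndependent_rows_iff_isUnit.mp hindeprows
  -- n positive
  have hnpos : 0 < n := by
    by_contra hle
    have hn0 : n = 0 := by omega
    have hK'bot : K' = ⊥ := Submodule.finrank_eq_zero.mp (by omega)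
    have hKtop : K = ⊤ := by
      have hc := hcompl
      rw [hK'bot] at hc
      simpa using hc.sup_eq_top
    obtain ⟨j₀, hj₀, r₀, hr₀⟩ := hnzcol
    have hx : (Pi.single r₀ 1 : Fin h → ℚ) ∈ K := hKtop ▸ Submodule.mem_top
    have := (LinearMap.mem_ker.mp hx)
    have h0 := congrFun this ⟨j₀, hj₀⟩
    rw [hψapp] at h0
    simp only [Matrix.vecMul, dotProduct] at h0
    rw [Finset.sum_eq_single r₀] at h0
    · simp at h0; exact hr₀ h0
    · intro b _ hb; simp [Pi.single_apply, hb]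
    · simp
  have hrowP' : ∀ (x : Fin n ⊕ Fin m) (j : Fin k),
      (R * Mq) (rE.symm x) j = Mq.vecMul (body x) j := by
    intro x j; rw [hrowP, Equiv.apply_symm_apply]
  refine ⟨n, m, hnm, R, hnpos, hunit, ?_, ?_, ?_⟩
  · -- integrality
    intro r j
    rw [hrowP]
    set x := rE r with hx
    set q : ℚ := Mq.vecMul (base x) j with hq
    have hsmul : Mq.vecMul (body x) j = d x * q := by
      rw [hbody]
      simp only [Matrix.smul_vecMul]
      rfl
    refine ⟨q.num * ∏ j' ∈ Finset.univ.erase j, ((Mq.vecMul (base x)) j').den, ?_⟩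
    rw [hsmul]
    have hdx : d x = ((Mq.vecMul (base x) j).den : ℚ) *
        ∏ j' ∈ Finset.univ.erase j, ((Mq.vecMul (base x) j').den : ℚ) :=
      (Finset.mul_prod_erase Finset.univ _ (Finset.mem_univ j)).symm
    rw [hdx, ← hq]
    have hden := ratden q
    push_cast
    linear_combination (-(∏ j' ∈ Finset.univ.erase j, ((Mq.vecMul (base x) j').den : ℚ))) * hden
  · -- bottom rows vanish on Jset
    intro i j hj
    show (R * Mq) (rE.symm (.inr i)) j = 0
    rw [hrowP']
    have hker := hbodyK i
    have h0 := congrFun (LinearMap.mem_ker.mp hker) ⟨j, hj⟩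
    rw [hψapp] at h0
    exact h0
  · -- top rows independent on Jset coordinates
    show LinearIndependent ℚ (fun i : Fin n => fun j : {x // x ∈ Jset} =>
      (R * Mq) (rE.symm (.inl i)) (j : Fin k))
    rw [Fintype.linearIndependent_iff]
    intro g hg
    have hg2 : (∑ i : Fin n, g i • ψ (body (Sum.inl i))) = 0 := by
      rw [← hg]
      refine Finset.sum_congr rfl fun i _ => ?_
      congr 1
      funext j
      rw [hrowP', hψapp]
    have hw : ψ (∑ i : Fin n, g i • body (Sum.inl i)) = 0 := by
      rw [map_sum]
      simpa only [map_smul] using hg2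
    have hwK : (∑ i : Fin n, g i • body (Sum.inl i)) ∈ K := LinearMap.mem_ker.mpr hw
    have hwK' : (∑ i : Fin n, g i • body (Sum.inl i)) ∈ K' :=
      Submodule.sum_mem _ (fun i _ => K'.smul_mem _ (hbodyK' i))
    have hw0 : (∑ i : Fin n, g i • body (Sum.inl i)) = 0 :=
      Submodule.disjoint_def.mp hcompl.disjoint _ hwK hwK'
    have hindinl : LinearIndependent ℚ (fun i : Fin n => body (Sum.inl i)) :=
      hindepbody.comp Sum.inl Sum.inl_injective
    exact Fintype.linearIndependent_iff.mp hindinl g hw0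

/-- **Structure from the columns condition (Proposition: (iii)∧(i) ⇒ (iv)).**
If `M ∈ ℤ^{h×k}` has rank `h`, every nonzero vector of its row space has a nonempty
set of nonzero coordinates summing to zero, and `M` obeys the columns condition,
then `M` is equivalent (column permutations and elementary row operations) to a
block matrix `[[A, B], [0, C]]` with `A ∈ ℤ^{n×s}` of rank `n` whose columns sum to
zero and `C ∈ ℤ^{m×t}` obeying the columns condition. -/
theorem stmt7 (h k : ℕ) (hh : 0 < h) (hk : 0 < k) (M : Matrix (Fin h) (Fin k) ℤ)
    (hrank : (M.map (Int.cast : ℤ → ℚ)).rank = h)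
    (hrow : ∀ v : Fin k → ℚ,
      v ∈ Submodule.span ℚ (Set.range fun i : Fin h => fun j : Fin k => (M i j : ℚ)) →
      v ≠ 0 →
      ∃ J : Finset (Fin k), J.Nonempty ∧ (∀ j ∈ J, v j ≠ 0) ∧ ∑ j ∈ J, v j = 0)
    (hcc : ColumnsCondition M) :
    ∃ (n s m t : ℕ) (hn : 0 < n) (hs : 0 < s)
      (hnm : h = n + m) (hst : k = s + t)
      (A : Matrix (Fin n) (Fin s) ℤ) (B : Matrix (Fin n) (Fin t) ℤ)
      (C : Matrix (Fin m) (Fin t) ℤ)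
      (R : Matrix (Fin h) (Fin h) ℚ) (σ : Equiv.Perm (Fin k)),
      IsUnit R ∧
      R * (M.map (Int.cast : ℤ → ℚ)).submatrix id σ =
        (Matrix.reindex finSumFinEquiv finSumFinEquiv
          (Matrix.fromBlocks (A.map (Int.cast : ℤ → ℚ)) (B.map (Int.cast : ℤ → ℚ))
            0 (C.map (Int.cast : ℤ → ℚ)))).submatrix (Fin.cast hnm) (Fin.cast hst) ∧
      (A.map (Int.cast : ℤ → ℚ)).rank = n ∧
      (∀ i : Fin n, ∑ j : Fin s, A i j = 0) ∧
      ColumnsCondition C := by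
  classical
  have hnz : ∃ r j, ((M r j : ℤ) : ℚ) ≠ 0 := by
    by_contra hcon
    push_neg at hcon
    have hzero : M.map (Int.cast : ℤ → ℚ) = 0 := by
      ext r j
      simpa [Matrix.map_apply] using hcon r j
    rw [hzero, Matrix.rank_zero] at hrank
    omega
  obtain ⟨Jset, ⟨j₀, hj₀, r₀, hr₀⟩, hsum, p', J', hd', hne', hcover', hspan'⟩ := L1 M hcc hnz
  obtain ⟨s, t, hst, ε, hscard, hεl, hεr⟩ := L2 Jset
  obtain ⟨n, m, hnm, R, hn, hunit, hint, hbot, hindep⟩ :=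
    L3 (M.map (Int.cast : ℤ → ℚ)) Jset ⟨j₀, hj₀, r₀, by simpa [Matrix.map_apply] using hr₀⟩

  classical
  set Mq : Matrix (Fin h) (Fin k) ℚ := M.map (Int.cast : ℤ → ℚ) with hMq
  set P : Matrix (Fin h) (Fin k) ℚ := R * Mq with hP
  obtain ⟨z, hz⟩ : ∃ z : Fin h → Fin k → ℤ, ∀ r j, ((z r j : ℚ)) = P r j := by
    choose z hz using hint
    exact ⟨z, hz⟩
  set rE : Fin h ≃ (Fin n ⊕ Fin m) := (finCongr hnm).trans finSumFinEquiv.symm with hrE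
  set cE : Fin k ≃ (Fin s ⊕ Fin t) := (finCongr hst).trans finSumFinEquiv.symm with hcE
  set A : Matrix (Fin n) (Fin s) ℤ := Matrix.of fun i a => z (rE.symm (.inl i)) (ε (.inl a))
    with hA
  set B : Matrix (Fin n) (Fin t) ℤ := Matrix.of fun i b => z (rE.symm (.inl i)) (ε (.inr b))
    with hB
  set C : Matrix (Fin m) (Fin t) ℤ := Matrix.of fun i b => z (rE.symm (.inr i)) (ε (.inr b))
    with hC
  set σ : Equiv.Perm (Fin k) := cE.trans ε with hσ
  have hs : 0 < s := by
    rw [hscard]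
    exact Finset.card_pos.mpr ⟨j₀, hj₀⟩
  -- index facts
  have hidxr : ∀ r : Fin h, finSumFinEquiv.symm (Fin.cast hnm r) = rE r := fun r => rfl
  have hidxc : ∀ j : Fin k, finSumFinEquiv.symm (Fin.cast hst j) = cE j := fun j => rfl
  have hσc : ∀ j : Fin k, σ j = ε (cE j) := fun j => rfl
  refine ⟨n, s, m, t, hn, hs, hnm, hst, A, B, C, R, σ, hunit, ?_, ?_, ?_, ?_⟩
  · -- block identity
    ext r j
    have hL : (R * Mq.submatrix id σ) r j = P r (σ j) := by
      rw [hP, Matrix.mul_apply, Matrix.mul_apply]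
      exact Finset.sum_congr rfl fun x _ => rfl
    rw [hL]
    simp only [Matrix.reindex_apply, Matrix.submatrix_apply, Equiv.symm_symm]
    rw [hidxr, hidxc, hσc]
    rcases h1 : rE r with i | i <;> rcases h2 : cE j with a | b <;>
      simp only [Matrix.fromBlocks_apply₁₁, Matrix.fromBlocks_apply₁₂,
        Matrix.fromBlocks_apply₂₁, Matrix.fromBlocks_apply₂₂, Matrix.map_apply,
        Matrix.zero_apply]
    · rw [show r = rE.symm (.inl i) by rw [← h1, Equiv.symm_apply_apply]]
      exact (hz _ _).symm
    · rw [show r = rE.symm (.inl i) by rw [← h1, Equiv.symm_apply_apply]]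
      exact (hz _ _).symm
    · rw [show r = rE.symm (.inr i) by rw [← h1, Equiv.symm_apply_apply]]
      exact hbot i _ (hεl a)
    · rw [show r = rE.symm (.inr i) by rw [← h1, Equiv.symm_apply_apply]]
      exact (hz _ _).symm
  · -- rank
    obtain ⟨e2, he2⟩ : ∃ e2 : Fin s ≃ {x // x ∈ Jset}, ∀ a, (e2 a : Fin k) = ε (.inl a) := by
      have hbij : Function.Bijective (fun a : Fin s => (⟨ε (.inl a), hεl a⟩ : {x // x ∈ Jset})) := by
        rw [Fintype.bijective_iff_injective_and_card]
        constructor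
        · intro a₁ a₂ hEq
          simp only [Subtype.mk.injEq, EmbeddingLike.apply_eq_iff_eq, Sum.inl.injEq] at hEq
          exact hEq
        · simp [Fintype.card_coe, hscard]
      exact ⟨Equiv.ofBijective _ hbij, fun a => rfl⟩
    have hrows : LinearIndependent ℚ (fun i : Fin n => (A.map (Int.cast : ℤ → ℚ)) i) := by
      set Φ : ({x // x ∈ Jset} → ℚ) →ₗ[ℚ] (Fin s → ℚ) := LinearMap.funLeft ℚ ℚ e2 with hΦ
      have hΦinj : Function.Injective Φ :=
        LinearMap.funLeft_injective_of_surjective ℚ ℚ e2 e2.surjective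
      have hcomp : (fun i : Fin n => (A.map (Int.cast : ℤ → ℚ)) i) =
          fun i => Φ ((fun i : Fin n => fun j : {x // x ∈ Jset} => P (rE.symm (.inl i)) (j : Fin k)) i) := by
        funext i
        funext a
        simp only [hΦ, LinearMap.funLeft_apply, Matrix.map_apply]
        rw [he2 a]
        exact hz (rE.symm (Sum.inl i)) (ε (Sum.inl a))
      rw [hcomp]
      refine LinearIndependent.map' ?_ Φ (LinearMap.ker_eq_bot.mpr hΦinj)
      exact hindep
    have := hrows.rank_matrix
    simp at this; exact this
  · -- column sums of A
    intro i
    have hcast : ((∑ a : Fin s, A i a : ℤ) : ℚ) = 0 := by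
      push_cast
      have hrw : ∀ a : Fin s, ((A i a : ℤ) : ℚ) = P (rE.symm (.inl i)) (ε (.inl a)) :=
        fun a => hz _ _
      rw [Finset.sum_congr rfl (fun a _ => hrw a)]
      have himg : Finset.image (fun a : Fin s => ε (.inl a)) Finset.univ = Jset := by
        apply Finset.eq_of_subset_of_card_le
        · intro j hj
          obtain ⟨a, -, rfl⟩ := Finset.mem_image.mp hj
          exact hεl a
        · rw [Finset.card_image_of_injective _ (fun a₁ a₂ hEq => by
            simpa using hEq)]
          simp [hscard]
      have : ∑ a : Fin s, P (rE.symm (.inl i)) (ε (.inl a)) =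
          ∑ j ∈ Jset, P (rE.symm (.inl i)) j := by
        rw [← himg, Finset.sum_image]
        intro a₁ _ a₂ _ hEq
        simpa using hEq
      rw [this]
      calc ∑ j ∈ Jset, P (rE.symm (.inl i)) j
          = ∑ j ∈ Jset, ∑ x : Fin h, R (rE.symm (.inl i)) x * Mq x j := by
            refine Finset.sum_congr rfl fun j _ => ?_
            rw [hP, Matrix.mul_apply]
        _ = ∑ x : Fin h, ∑ j ∈ Jset, R (rE.symm (.inl i)) x * Mq x j := Finset.sum_comm
        _ = ∑ x : Fin h, R (rE.symm (.inl i)) x * ∑ j ∈ Jset, Mq x j := by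
            refine Finset.sum_congr rfl fun x _ => (Finset.mul_sum _ _ _).symm
        _ = 0 := by
            refine Finset.sum_eq_zero fun x _ => ?_
            have hx : ∑ j ∈ Jset, Mq x j = 0 := by
              have h2 := congrFun hsum x
              simpa [Finset.sum_apply, hMq, Matrix.map_apply] using h2
            rw [hx, mul_zero]
    exact_mod_cast hcast
  · -- ColumnsCondition C
    set J'' : Fin p' → Finset (Fin t) :=
      fun a => Finset.univ.filter (fun b => ε (.inr b) ∈ J' a) with hJ''
    have hmemJ'' : ∀ (a : Fin p') (b : Fin t), b ∈ J'' a ↔ ε (.inr b) ∈ J' a := by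
      intro a b; simp [hJ'']
    have hJ'sub : ∀ a : Fin p', ∀ j ∈ J' a, j ∉ Jset := by
      intro a j hj
      have hmem : j ∈ Finset.univ.biUnion J' := Finset.mem_biUnion.mpr ⟨a, mem_univ _, hj⟩
      rw [hcover'] at hmem
      exact Finset.mem_compl.mp hmem
    have hrep : ∀ j : Fin k, j ∉ Jset → ∃ b : Fin t, ε (.inr b) = j := by
      intro j hj
      rcases hj2 : ε.symm j with a | b
      · exfalso
        apply hj
        have : ε (.inl a) = j := by rw [← hj2, Equiv.apply_symm_apply]
        rw [← this]; exact hεl a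
      · exact ⟨b, by rw [← hj2, Equiv.apply_symm_apply]⟩
    have himg2 : ∀ a : Fin p', Finset.image (fun b : Fin t => ε (.inr b)) (J'' a) = J' a := by
      intro a
      ext j
      simp only [Finset.mem_image]
      constructor
      · rintro ⟨b, hb, rfl⟩; exact (hmemJ'' a b).mp hb
      · intro hj
        obtain ⟨b, rfl⟩ := hrep j (hJ'sub a j hj)
        exact ⟨b, (hmemJ'' a b).mpr hj, rfl⟩
    set F : (Fin h → ℚ) →ₗ[ℚ] (Fin m → ℚ) :=
      (LinearMap.funLeft ℚ ℚ (fun i : Fin m => rE.symm (.inr i))).comp R.mulVecLin with hF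
    have hFcol : ∀ j : Fin k, F (fun r : Fin h => (M r j : ℚ)) =
        fun i : Fin m => P (rE.symm (.inr i)) j := by
      intro j
      funext i
      simp only [hF, LinearMap.comp_apply, LinearMap.funLeft_apply, Matrix.mulVecLin_apply]
      rw [hP, Matrix.mul_apply]
      simp [Matrix.mulVec, dotProduct, hMq, Matrix.map_apply]
    have hF0 : ∀ j ∈ Jset, F (fun r : Fin h => (M r j : ℚ)) = 0 := by
      intro j hj
      rw [hFcol]
      funext i
      exact hbot i j hj
    have hFC : ∀ b : Fin t, F (fun r : Fin h => (M r (ε (.inr b)) : ℚ)) =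
        fun i : Fin m => (C i b : ℚ) := by
      intro b
      rw [hFcol]
      funext i
      exact (hz _ _).symm
    have hFsum : ∀ a : Fin p', F (∑ j ∈ J' a, fun r : Fin h => (M r j : ℚ)) =
        ∑ b ∈ J'' a, (fun i : Fin m => (C i b : ℚ)) := by
      intro a
      rw [map_sum, ← himg2 a, Finset.sum_image (fun b1 _ b2 _ hEq => by simpa using hEq)]
      exact Finset.sum_congr rfl fun b _ => hFC b
    have hmem : ∀ a : Fin p', (∑ b ∈ J'' a, (fun i : Fin m => (C i b : ℚ))) ∈
        Submodule.span ℚ (insert (0 : Fin m → ℚ)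
          ((fun b : Fin t => fun i : Fin m => (C i b : ℚ)) ''
            {b : Fin t | ∃ a' : Fin p', (a' : ℕ) < (a : ℕ) ∧ b ∈ J'' a'})) := by
      intro a
      rw [← hFsum]
      have h1 := hspan' a
      have h2 := Submodule.mem_map_of_mem (f := F) h1
      rw [Submodule.map_span] at h2
      refine Submodule.span_mono ?_ h2
      rintro _ ⟨_, ⟨jx, hjx, rfl⟩, rfl⟩
      rcases hjx with hjx | hjx
      · left
        exact hF0 jx hjx
      · obtain ⟨a', ha', hja'⟩ := hjx
        obtain ⟨b, rfl⟩ := hrep jx (hJ'sub a' jx hja')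
        right
        refine ⟨b, ⟨a', ha', (hmemJ'' a' b).mpr hja'⟩, ?_⟩
        exact (hFC b).symm
    refine ⟨p', J'', ?_, ?_, ?_, ?_, ?_⟩
    · intro a₁ a₂ hne
      rw [Finset.disjoint_left]
      intro b hb1 hb2
      exact Finset.disjoint_left.mp (hd' a₁ a₂ hne) ((hmemJ'' a₁ b).mp hb1) ((hmemJ'' a₂ b).mp hb2)
    · ext b
      simp only [Finset.mem_biUnion, Finset.mem_univ, true_and, iff_true]
      have hb : ε (.inr b) ∈ Finset.univ.biUnion J' := by
        rw [hcover']
        exact Finset.mem_compl.mpr (hεr b)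
      obtain ⟨a, -, ha⟩ := Finset.mem_biUnion.mp hb
      exact ⟨a, (hmemJ'' a b).mpr ha⟩
    · intro a
      obtain ⟨j, hj⟩ := hne' a
      obtain ⟨b, rfl⟩ := hrep j (hJ'sub a j hj)
      exact ⟨b, (hmemJ'' a b).mpr hj⟩
    · intro a ha
      have hempty : {b : Fin t | ∃ a' : Fin p', (a' : ℕ) < (a : ℕ) ∧ b ∈ J'' a'} = ∅ := by
        ext b
        simp [ha]
      have h3 := hmem a
      rw [hempty, Set.image_empty, Submodule.span_insert_zero, Submodule.span_empty,
        Submodule.mem_bot] at h3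
      exact h3
    · intro a ha
      have h3 := hmem a
      rwa [Submodule.span_insert_zero] at h3
end

section
/- Let M ∈ ℤ^{h×k} have rank h. Suppose M is equivalent to a block matrix [[A, B],[0, C]] where A ∈ ℤ^{n×s} has rank n and columns summing to zero, and C ∈ ℤ^{m×t} satisfies: for every nonzero vector w in the row space of C there is a nonempty set J of indices with w_j ≠ 0 for all j ∈ J and ∑_{j∈J} w_j = 0. Then for every nonzero vector v = (v_1,...,v_k) in the row space of M, there exists a nonempty set J ⊆ {1,...,k} such that v_j ≠ 0 for all j ∈ J and ∑_{j∈J} v_j = 0. -/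
open Finset
open scoped Matrix

/-- **Row-space property from block structure (Proposition: (iv) ⇒ (iii)).**
If `M ∈ ℤ^{h×k}` of rank `h` is equivalent (column permutations and elementary row
operations) to `[[A, B], [0, C]]` where `A` has rank `n` and columns summing to
zero, and every nonzero vector of the row space of `C` has a nonempty set of
nonzero coordinates summing to zero, then every nonzero vector `v` of the row space
of `M` admits a nonempty set `J` with `v_j ≠ 0` for `j ∈ J` and `∑_{j∈J} v_j = 0`. -/
theorem stmt8 (h k n s m t : ℕ) (hn : 0 < n) (hs : 0 < s)
    (hnm : h = n + m) (hst : k = s + t)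
    (M : Matrix (Fin h) (Fin k) ℤ)
    (hrank : (M.map (Int.cast : ℤ → ℚ)).rank = h)
    (A : Matrix (Fin n) (Fin s) ℤ) (B : Matrix (Fin n) (Fin t) ℤ)
    (C : Matrix (Fin m) (Fin t) ℤ)
    (R : Matrix (Fin h) (Fin h) ℚ) (σ : Equiv.Perm (Fin k))
    (hR : IsUnit R)
    (heq : R * (M.map (Int.cast : ℤ → ℚ)).submatrix id σ =
      (Matrix.reindex finSumFinEquiv finSumFinEquiv
        (Matrix.fromBlocks (A.map (Int.cast : ℤ → ℚ)) (B.map (Int.cast : ℤ → ℚ))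
          0 (C.map (Int.cast : ℤ → ℚ)))).submatrix (Fin.cast hnm) (Fin.cast hst))
    (hArank : (A.map (Int.cast : ℤ → ℚ)).rank = n)
    (hAcols : ∀ i : Fin n, ∑ j : Fin s, A i j = 0)
    (hC : ∀ w : Fin t → ℚ,
      w ∈ Submodule.span ℚ (Set.range fun i : Fin m => fun j : Fin t => (C i j : ℚ)) →
      w ≠ 0 →
      ∃ J : Finset (Fin t), J.Nonempty ∧ (∀ j ∈ J, w j ≠ 0) ∧ ∑ j ∈ J, w j = 0) :
    ∀ v : Fin k → ℚ,
      v ∈ Submodule.span ℚ (Set.range fun i : Fin h => fun j : Fin k => (M i j : ℚ)) →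
      v ≠ 0 →
      ∃ J : Finset (Fin k), J.Nonempty ∧ (∀ j ∈ J, v j ≠ 0) ∧ ∑ j ∈ J, v j = 0 := by
  classical
  intro v hv hv0
  set M' := M.map (Int.cast : ℤ → ℚ) with hM'
  set A' := A.map (Int.cast : ℤ → ℚ) with hA'
  set B' := B.map (Int.cast : ℤ → ℚ) with hB'
  set C' := C.map (Int.cast : ℤ → ℚ) with hC'
  set F := Matrix.fromBlocks A' B' 0 C' with hF
  -- column index equivalence
  set eC : Fin k ≃ Fin s ⊕ Fin t :=
    (finCongr hst).trans finSumFinEquiv.symm with heC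
  set eR : Fin h ≃ Fin n ⊕ Fin m :=
    (finCongr hnm).trans finSumFinEquiv.symm with heR
  rw [Submodule.mem_span_range_iff_exists_fun] at hv
  obtain ⟨c, hc⟩ := hv
  have hvM : ∀ j, v j = (c ᵥ* M') j := by
    intro j
    rw [← hc]
    simp [Matrix.vecMul, dotProduct, hM', Matrix.map_apply]
  -- invert R
  have hdet : IsUnit R.det := (Matrix.isUnit_iff_isUnit_det R).mp hR
  have hMs : M'.submatrix id σ = R⁻¹ *
      ((Matrix.reindex finSumFinEquiv finSumFinEquiv F).submatrix (Fin.cast hnm) (Fin.cast hst)) := by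
    rw [← heq, ← Matrix.mul_assoc, Matrix.nonsing_inv_mul R hdet, Matrix.one_mul]
  set d' : Fin n ⊕ Fin m → ℚ := (c ᵥ* R⁻¹) ∘ eR.symm with hd'
  have key : ∀ q : Fin s ⊕ Fin t, v (σ (eC.symm q)) = (d' ᵥ* F) q := by
    intro q
    have h1 : v (σ (eC.symm q)) = (c ᵥ* (M'.submatrix id σ)) (eC.symm q) := by
      rw [hvM]
      simp [Matrix.vecMul, dotProduct, Matrix.submatrix_apply]
    rw [h1, hMs, ← Matrix.vecMul_vecMul]
    set d := c ᵥ* R⁻¹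
    show (d ᵥ* _) (eC.symm q) = ((d ∘ eR.symm) ᵥ* F) q
    simp only [Matrix.vecMul, dotProduct, Matrix.submatrix_apply,
      Matrix.reindex_apply, Function.comp_apply]
    rw [← Equiv.sum_comp eR.symm]
    apply Finset.sum_congr rfl
    intro p _
    congr 1
    · congr 1 <;>
      · simp [heR, heC, finCongr, Fin.cast]
  have keyl : ∀ b : Fin s, v (σ (eC.symm (Sum.inl b))) = ((d' ∘ Sum.inl) ᵥ* A') b := by
    intro b
    rw [key, hF, Matrix.vecMul_fromBlocks]
    simp
  have keyr : ∀ b : Fin t,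
      v (σ (eC.symm (Sum.inr b))) = ((d' ∘ Sum.inl) ᵥ* B' + (d' ∘ Sum.inr) ᵥ* C') b := by
    intro b
    rw [key, hF, Matrix.vecMul_fromBlocks]
    simp
  set x : Fin s → ℚ := (d' ∘ Sum.inl) ᵥ* A' with hx
  set y : Fin t → ℚ := (d' ∘ Sum.inl) ᵥ* B' + (d' ∘ Sum.inr) ᵥ* C' with hy
  have hinj : Function.Injective (fun q : Fin s ⊕ Fin t => σ (eC.symm q)) :=
    σ.injective.comp eC.symm.injective
  by_cases hx0 : x = 0
  · -- first block coefficients vanish; use C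
    have hAli : LinearIndependent ℚ (fun i => A' i) := by
      rw [linearIndependent_iff_card_eq_finrank_span]
      rw [Matrix.rank_eq_finrank_span_row] at hArank
      simp [Set.finrank, ← hArank]
      rfl
    have hd1 : (d' ∘ Sum.inl) = 0 := by
      have hinj2 := Matrix.vecMul_injective_iff.mpr hAli
      apply hinj2
      show (d' ∘ Sum.inl) ᵥ* A' = (0 : Fin n → ℚ) ᵥ* A'
      rw [← hx, hx0, Matrix.zero_vecMul]
    have hyC : y = (d' ∘ Sum.inr) ᵥ* C' := by
      rw [hy, hd1, Matrix.zero_vecMul, zero_add]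
    have hymem : y ∈ Submodule.span ℚ
        (Set.range fun i : Fin m => fun j : Fin t => (C i j : ℚ)) := by
      rw [Submodule.mem_span_range_iff_exists_fun]
      refine ⟨d' ∘ Sum.inr, ?_⟩
      funext j
      rw [hyC]
      simp [Matrix.vecMul, dotProduct, hC', Matrix.map_apply]
    have hy0 : y ≠ 0 := by
      intro hy0
      apply hv0
      funext j
      obtain ⟨q, hq⟩ := (σ.symm.trans eC).surjective.comp (Equiv.refl _).surjective
        |>.comp (fun q => ⟨q, rfl⟩ : Function.Surjective id) |> fun _ => (by
          exact ⟨eC (σ.symm j), by simp⟩ : ∃ q, σ (eC.symm q) = j)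
      rw [← hq]
      cases q with
      | inl b => rw [keyl b, hx0]; rfl
      | inr b => rw [keyr b]; rw [← hy] at *; rw [hy0]; rfl
    obtain ⟨J₀, hJ₀ne, hJ₀nz, hJ₀sum⟩ := hC y hymem hy0
    refine ⟨J₀.image (fun b => σ (eC.symm (Sum.inr b))), ?_, ?_, ?_⟩
    · exact hJ₀ne.image _
    · intro j hj
      obtain ⟨b, hb, rfl⟩ := Finset.mem_image.mp hj
      rw [keyr b]
      exact hJ₀nz b hb
    · rw [Finset.sum_image (fun a _ b _ hab => Sum.inr_injective (hinj hab))]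
      rw [← hJ₀sum]
      exact Finset.sum_congr rfl fun b hb => keyr b
  · -- x ≠ 0 : use the support of x, whose sum is 0 since columns of A sum to 0
    have hxsum : ∑ b : Fin s, x b = 0 := by
      rw [hx]
      simp only [Matrix.vecMul, dotProduct]
      rw [Finset.sum_comm]
      apply Finset.sum_eq_zero
      intro i _
      rw [← Finset.mul_sum]
      have : ∑ b : Fin s, A' i b = 0 := by
        have := hAcols i
        rw [hA']
        simp only [Matrix.map_apply]
        exact_mod_cast congrArg (Int.cast : ℤ → ℚ) this
      rw [this, mul_zero]
    refine ⟨(Finset.univ.filter (fun b => x b ≠ 0)).image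
        (fun b => σ (eC.symm (Sum.inl b))), ?_, ?_, ?_⟩
    · obtain ⟨b, hb⟩ := Function.ne_iff.mp hx0
      exact ⟨_, Finset.mem_image_of_mem _ (Finset.mem_filter.mpr ⟨Finset.mem_univ b, hb⟩)⟩
    · intro j hj
      obtain ⟨b, hb, rfl⟩ := Finset.mem_image.mp hj
      rw [keyl b]
      exact (Finset.mem_filter.mp hb).2
    · rw [Finset.sum_image (fun a _ b _ hab => Sum.inl_injective (hinj hab))]
      rw [Finset.sum_congr rfl (fun b _ => keyl b)]
      rw [Finset.sum_filter_ne_zero]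
      exact hxsum
end

section
/- Let s, N ∈ ℕ, B ⊆ ℤ finite, q ∈ ℕ₀, and Q_1, ..., Q_s : B^q → ℤ arbitrary functions. Define for finitely supported h : ℤ → ℂ the operator Ψ(h) = ∑_{x∈ℤ} ∑_{d∈B^q} ∏_{j=1}^s h(x + Q_j(d)). If f, g : ℤ → [0,1] are supported on {1,...,N}, then |Ψ(f) − Ψ(g)| ≤ s · |B|^q · N^{1/2} · ‖f − g‖_{L²(ℤ)}. -/
open Finset

lemma abs_prod_sub_prod_le {ι : Type*} (t : Finset ι) (a b : ι → ℝ)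
    (ha : ∀ i, a i ∈ Set.Icc (0:ℝ) 1) (hb : ∀ i, b i ∈ Set.Icc (0:ℝ) 1) :
    |∏ i ∈ t, a i - ∏ i ∈ t, b i| ≤ ∑ i ∈ t, |a i - b i| := by
  induction t using Finset.cons_induction with
  | empty => simp
  | cons i t hi ih =>
    rw [Finset.prod_cons, Finset.prod_cons, Finset.sum_cons]
    have key : a i * ∏ j ∈ t, a j - b i * ∏ j ∈ t, b j
        = a i * (∏ j ∈ t, a j - ∏ j ∈ t, b j) + (a i - b i) * ∏ j ∈ t, b j := by ring
    have hP : |∏ j ∈ t, b j| ≤ 1 := by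
      rw [abs_of_nonneg (Finset.prod_nonneg fun j _ => (hb j).1)]
      exact Finset.prod_le_one (fun j _ => (hb j).1) (fun j _ => (hb j).2)
    have hai : |a i| ≤ 1 := by
      rw [abs_of_nonneg (ha i).1]; exact (ha i).2
    calc |a i * ∏ j ∈ t, a j - b i * ∏ j ∈ t, b j|
        = |a i * (∏ j ∈ t, a j - ∏ j ∈ t, b j) + (a i - b i) * ∏ j ∈ t, b j| := by rw [key]
      _ ≤ |a i * (∏ j ∈ t, a j - ∏ j ∈ t, b j)| + |(a i - b i) * ∏ j ∈ t, b j| := abs_add_le _ _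
      _ = |a i| * |∏ j ∈ t, a j - ∏ j ∈ t, b j| + |a i - b i| * |∏ j ∈ t, b j| := by
          rw [abs_mul, abs_mul]
      _ ≤ 1 * (∑ j ∈ t, |a j - b j|) + |a i - b i| * 1 := by
          refine add_le_add (mul_le_mul hai ih (abs_nonneg _) zero_le_one)
            (mul_le_mul_of_nonneg_left hP (abs_nonneg _))
      _ = |a i - b i| + ∑ j ∈ t, |a j - b j| := by ring

/-- **Generalised von Neumann theorem for the auxiliary operator Ψ.**
For `f, g : ℤ → [0,1]` supported on `{1,…,N}` and arbitrary `Q_j : B^q → ℤ`,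
with `Ψ(h) = ∑_{x∈ℤ} ∑_{d∈B^q} ∏_{j=1}^s h(x + Q_j(d))`, one has
`|Ψ(f) − Ψ(g)| ≤ s |B|^q N^{1/2} ‖f − g‖_{L²(ℤ)}`. -/
theorem stmt10 (s N : ℕ) (hs : 0 < s) (hN : 0 < N) (B : Finset ℤ) (q : ℕ)
    (Q : Fin s → ((Fin q → ℤ) → ℤ)) (f g : ℤ → ℝ)
    (hfsupp : ∀ x : ℤ, x ∉ Finset.Icc (1 : ℤ) (N : ℤ) → f x = 0)
    (hgsupp : ∀ x : ℤ, x ∉ Finset.Icc (1 : ℤ) (N : ℤ) → g x = 0)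
    (hf : ∀ x : ℤ, f x ∈ Set.Icc (0 : ℝ) 1)
    (hg : ∀ x : ℤ, g x ∈ Set.Icc (0 : ℝ) 1) :
    |(∑ᶠ x : ℤ, ∑ d ∈ Fintype.piFinset (fun _ : Fin q => B),
        ∏ j : Fin s, f (x + Q j d)) -
      (∑ᶠ x : ℤ, ∑ d ∈ Fintype.piFinset (fun _ : Fin q => B),
        ∏ j : Fin s, g (x + Q j d))| ≤
      (s : ℝ) * (B.card : ℝ) ^ q * Real.sqrt N *
        Real.sqrt (∑ᶠ x : ℤ, (f x - g x) ^ 2) := by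
  set D := Fintype.piFinset (fun _ : Fin q => B) with hD
  set j0 : Fin s := ⟨0, hs⟩ with hj0
  set S : Finset ℤ := D.biUnion (fun d => Finset.Icc (1 - Q j0 d) ((N:ℤ) - Q j0 d)) with hS
  -- support lemma
  have hsupp : ∀ (u : ℤ → ℝ), (∀ x ∉ Finset.Icc (1:ℤ) (N:ℤ), u x = 0) →
      (Function.support (fun x => ∑ d ∈ D, ∏ j : Fin s, u (x + Q j d)) : Set ℤ) ⊆ ↑S := by
    intro u hu x hx
    by_contra hxS
    apply hx
    refine Finset.sum_eq_zero fun d hd => ?_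
    refine Finset.prod_eq_zero (Finset.mem_univ j0) ?_
    apply hu
    intro hmem
    apply hxS
    refine Finset.mem_coe.2 (Finset.mem_biUnion.2 ⟨d, hd, ?_⟩)
    simp only [Finset.mem_Icc] at hmem ⊢
    omega
  have hΨf := finsum_eq_finset_sum_of_support_subset _ (hsupp f hfsupp)
  have hΨg := finsum_eq_finset_sum_of_support_subset _ (hsupp g hgsupp)
  have hsq : ∑ᶠ x : ℤ, (f x - g x) ^ 2 = ∑ x ∈ Finset.Icc (1:ℤ) (N:ℤ), (f x - g x) ^ 2 := by
    refine finsum_eq_finset_sum_of_support_subset _ ?_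
    intro x hx
    by_contra hxI
    exact hx (by simp [hfsupp x hxI, hgsupp x hxI])
  rw [hΨf, hΨg, hsq]
  -- abbreviations
  set C : ℝ := ∑ y ∈ Finset.Icc (1:ℤ) (N:ℤ), |f y - g y| with hC
  have hstep : ∀ (c : ℤ), ∑ x ∈ S, |f (x + c) - g (x + c)| ≤ C := by
    intro c
    have hinj : ∑ x ∈ S, |f (x + c) - g (x + c)| = ∑ y ∈ S.image (· + c), |f y - g y| := by
      rw [Finset.sum_image (by intro a _ b _ hab; exact add_right_cancel hab)]
    rw [hinj, hC]
    have h1 : ∑ y ∈ S.image (· + c), |f y - g y|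
        ≤ ∑ y ∈ S.image (· + c) ∪ Finset.Icc (1:ℤ) (N:ℤ), |f y - g y| :=
      Finset.sum_le_sum_of_subset_of_nonneg Finset.subset_union_left
        (fun _ _ _ => abs_nonneg _)
    have h2 : ∑ y ∈ S.image (· + c) ∪ Finset.Icc (1:ℤ) (N:ℤ), |f y - g y|
        = ∑ y ∈ Finset.Icc (1:ℤ) (N:ℤ), |f y - g y| := by
      refine (Finset.sum_subset Finset.subset_union_right ?_).symm
      intro y _ hy
      simp [hfsupp y hy, hgsupp y hy]
    linarith
  have main : |(∑ x ∈ S, ∑ d ∈ D, ∏ j : Fin s, f (x + Q j d)) -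
      (∑ x ∈ S, ∑ d ∈ D, ∏ j : Fin s, g (x + Q j d))|
      ≤ (s : ℝ) * (B.card : ℝ) ^ q * C := by
    rw [← Finset.sum_sub_distrib]
    calc |∑ x ∈ S, ((∑ d ∈ D, ∏ j : Fin s, f (x + Q j d)) -
          ∑ d ∈ D, ∏ j : Fin s, g (x + Q j d))|
        ≤ ∑ x ∈ S, |(∑ d ∈ D, ∏ j : Fin s, f (x + Q j d)) -
          ∑ d ∈ D, ∏ j : Fin s, g (x + Q j d)| := Finset.abs_sum_le_sum_abs _ _
      _ ≤ ∑ x ∈ S, ∑ d ∈ D, |(∏ j : Fin s, f (x + Q j d)) - ∏ j : Fin s, g (x + Q j d)| := by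
          refine Finset.sum_le_sum fun x _ => ?_
          rw [← Finset.sum_sub_distrib]
          exact Finset.abs_sum_le_sum_abs _ _
      _ ≤ ∑ x ∈ S, ∑ d ∈ D, ∑ j : Fin s, |f (x + Q j d) - g (x + Q j d)| := by
          refine Finset.sum_le_sum fun x _ => Finset.sum_le_sum fun d _ => ?_
          exact abs_prod_sub_prod_le _ _ _ (fun j => hf _) (fun j => hg _)
      _ = ∑ d ∈ D, ∑ j : Fin s, ∑ x ∈ S, |f (x + Q j d) - g (x + Q j d)| := by
          rw [Finset.sum_comm]
          exact Finset.sum_congr rfl fun d _ => Finset.sum_comm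
      _ ≤ ∑ d ∈ D, ∑ j : Fin s, C := by
          exact Finset.sum_le_sum fun d _ => Finset.sum_le_sum fun j _ => hstep _
      _ = (D.card : ℝ) * (s : ℝ) * C := by
          simp [Finset.sum_const, mul_assoc]
      _ = (s : ℝ) * (B.card : ℝ) ^ q * C := by
          have : D.card = B.card ^ q := by
            simp [hD, Fintype.card_piFinset]
          rw [this]; push_cast; ring
  -- Cauchy-Schwarz: C ≤ √N * √(∑ h²)
  have hCS : C ≤ Real.sqrt N * Real.sqrt (∑ x ∈ Finset.Icc (1:ℤ) (N:ℤ), (f x - g x) ^ 2) := by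
    have hcard : ((Finset.Icc (1:ℤ) (N:ℤ)).card : ℝ) = (N : ℝ) := by
      rw [Int.card_Icc]
      simp
    have h1 : C ^ 2 ≤ (N : ℝ) * ∑ x ∈ Finset.Icc (1:ℤ) (N:ℤ), (f x - g x) ^ 2 := by
      have := sq_sum_le_card_mul_sum_sq (s := Finset.Icc (1:ℤ) (N:ℤ))
        (f := fun x => |f x - g x|)
      simp only [sq_abs] at this
      calc C ^ 2 ≤ ((Finset.Icc (1:ℤ) (N:ℤ)).card : ℝ) *
            ∑ x ∈ Finset.Icc (1:ℤ) (N:ℤ), (f x - g x) ^ 2 := this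
        _ = _ := by rw [hcard]
    have hCnn : 0 ≤ C := Finset.sum_nonneg fun _ _ => abs_nonneg _
    calc C = Real.sqrt (C ^ 2) := by rw [Real.sqrt_sq hCnn]
      _ ≤ Real.sqrt ((N : ℝ) * ∑ x ∈ Finset.Icc (1:ℤ) (N:ℤ), (f x - g x) ^ 2) :=
          Real.sqrt_le_sqrt h1
      _ = _ := Real.sqrt_mul (by positivity) _
  calc _ ≤ (s : ℝ) * (B.card : ℝ) ^ q * C := main
    _ ≤ (s : ℝ) * (B.card : ℝ) ^ q *
        (Real.sqrt N * Real.sqrt (∑ x ∈ Finset.Icc (1:ℤ) (N:ℤ), (f x - g x) ^ 2)) := by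
        have : (0:ℝ) ≤ (s : ℝ) * (B.card : ℝ) ^ q := by positivity
        exact mul_le_mul_of_nonneg_left hCS this
    _ = _ := by ring
end

section
/- Consider the 2×4 integer matrix M with rows (1, −2, 1, 0) and (1, −1, 0, 1). M obeys the columns condition, yet the system of quadratic equations x² + z² = 2y², x² + d² = y² has no solutions in positive integers (x, y, z, d). Consequently, this system is not partition regular over ℕ. -/
open Finset

private lemma int_prime_of_nat {p : ℕ} (hp : p.Prime) : Prime (p : ℤ) :=
  Int.prime_iff_natAbs_prime.mpr (by simpa using hp)

private lemma coprime_add_sub {p q : ℤ} (hpq : Int.gcd p q = 1) (hodd : (p + q) % 2 = 1) :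
    IsCoprime (p + q) (p - q) := by
  rw [Int.isCoprime_iff_gcd_eq_one]
  by_contra hg
  obtain ⟨ℓ, hℓ, hdvd⟩ := Nat.exists_prime_and_dvd hg
  have hℓ1 : (ℓ : ℤ) ∣ p + q :=
    dvd_trans (Int.natCast_dvd_natCast.mpr hdvd) (Int.gcd_dvd_left _ _)
  have hℓ2 : (ℓ : ℤ) ∣ p - q :=
    dvd_trans (Int.natCast_dvd_natCast.mpr hdvd) (Int.gcd_dvd_right _ _)
  have hP : Prime (ℓ : ℤ) := int_prime_of_nat hℓ
  have hne2 : ℓ ≠ 2 := by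
    rintro rfl
    have h2 : (2 : ℤ) ∣ p + q := by exact_mod_cast hℓ1
    omega
  have hnd2 : ¬ ((ℓ : ℤ) ∣ 2) := by
    intro h
    have h2 : ℓ ∣ 2 := by exact_mod_cast h
    rcases (Nat.dvd_prime Nat.prime_two).mp h2 with h | h
    · exact hℓ.one_lt.ne' h
    · exact hne2 h
  have hℓp : (ℓ : ℤ) ∣ p := by
    have hp' : (ℓ : ℤ) ∣ 2 * p := by
      have h : p + q + (p - q) = 2 * p := by ring
      exact h ▸ dvd_add hℓ1 hℓ2
    rcases hP.dvd_mul.mp hp' with h | h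
    · exact absurd h hnd2
    · exact h
  have hℓq : (ℓ : ℤ) ∣ q := by
    have hq' : (ℓ : ℤ) ∣ 2 * q := by
      have h : p + q - (p - q) = 2 * q := by ring
      exact h ▸ dvd_sub hℓ1 hℓ2
    rcases hP.dvd_mul.mp hq' with h | h
    · exact absurd h hnd2
    · exact h
  have : (ℓ : ℤ) ∣ (Int.gcd p q : ℤ) := Int.dvd_coe_gcd hℓp hℓq
  rw [hpq] at this
  have h1 : ℓ ∣ 1 := by exact_mod_cast this
  exact hℓ.one_lt.ne' (Nat.dvd_one.mp h1)

set_option maxHeartbeats 1600000 in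
/-- Fermat-style descent: `b⁴ + c² = a⁴` has no solutions in positive integers. -/
private lemma no_fermat_44 : ∀ a : ℕ, ∀ b c : ℤ, 0 < b → 0 < c →
    b ^ 4 + c ^ 2 = (a : ℤ) ^ 4 → False := by
  intro a
  induction a using Nat.strong_induction_on with
  | _ a IH =>
  intro b c hb hc heq
  set A : ℤ := (a : ℤ) with hAdef
  have hApos : 0 < A := by
    have hA0 : A ≠ 0 := by
      rintro h0
      rw [h0] at heq
      nlinarith [pow_pos hb 4, pow_pos hc 2]
    have hA1 : 0 ≤ A := by rw [hAdef]; exact_mod_cast Nat.zero_le a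
    omega
  by_cases hg : Int.gcd A b = 1
  case neg =>
    -- remove a common prime factor
    obtain ⟨ℓ, hℓ, hdvd⟩ := Nat.exists_prime_and_dvd hg
    have hP : Prime (ℓ : ℤ) := int_prime_of_nat hℓ
    have hℓA : (ℓ : ℤ) ∣ A := dvd_trans (Int.natCast_dvd_natCast.mpr hdvd) (Int.gcd_dvd_left _ _)
    have hℓb : (ℓ : ℤ) ∣ b := dvd_trans (Int.natCast_dvd_natCast.mpr hdvd) (Int.gcd_dvd_right _ _)
    have hc2 : ((ℓ : ℤ) ^ 2) ^ 2 ∣ c ^ 2 := by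
      have h4 : (ℓ : ℤ) ^ 4 ∣ A ^ 4 - b ^ 4 :=
        dvd_sub (pow_dvd_pow_of_dvd hℓA 4) (pow_dvd_pow_of_dvd hℓb 4)
      have hce : c ^ 2 = A ^ 4 - b ^ 4 := by linarith
      rw [hce]
      convert h4 using 1
      ring
    have hℓc : (ℓ : ℤ) ^ 2 ∣ c := (Int.pow_dvd_pow_iff two_ne_zero).mp hc2
    obtain ⟨A', hA'⟩ := hℓA
    obtain ⟨b', hb'⟩ := hℓb
    obtain ⟨c', hc'⟩ := hℓc
    have hℓpos : (0 : ℤ) < ℓ := by exact_mod_cast hℓ.pos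
    have hℓ2 : (2 : ℤ) ≤ ℓ := by exact_mod_cast hℓ.two_le
    have hA'pos : 0 < A' := by nlinarith
    have hb'pos : 0 < b' := by nlinarith
    have hc'pos : 0 < c' := by nlinarith
    have heq' : b' ^ 4 + c' ^ 2 = A' ^ 4 := by
      have hcancel : (ℓ : ℤ) ^ 4 * (b' ^ 4 + c' ^ 2) = (ℓ : ℤ) ^ 4 * A' ^ 4 := by
        rw [hA', hb', hc'] at heq
        ring_nf at heq ⊢
        linarith
      exact mul_left_cancel₀ (by positivity) hcancel
    have hlt : A'.toNat < a := by
      have h1 : A' < A := by nlinarith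
      have h2 : (A'.toNat : ℤ) = A' := Int.toNat_of_nonneg hA'pos.le
      omega
    exact IH A'.toNat hlt b' c' hb'pos hc'pos (by rw [Int.toNat_of_nonneg hA'pos.le]; exact heq')
  case pos =>
  -- coprime case
  have hgbc : Int.gcd (b ^ 2) c = 1 := by
    by_contra h
    obtain ⟨ℓ, hℓ, hdvd⟩ := Nat.exists_prime_and_dvd h
    have hP : Prime (ℓ : ℤ) := int_prime_of_nat hℓ
    have h1 : (ℓ : ℤ) ∣ b ^ 2 := dvd_trans (Int.natCast_dvd_natCast.mpr hdvd) (Int.gcd_dvd_left _ _)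
    have h2 : (ℓ : ℤ) ∣ c := dvd_trans (Int.natCast_dvd_natCast.mpr hdvd) (Int.gcd_dvd_right _ _)
    have hℓb : (ℓ : ℤ) ∣ b := hP.dvd_of_dvd_pow h1
    have hA4 : (ℓ : ℤ) ∣ A ^ 4 := by
      rw [← heq]
      exact dvd_add (dvd_pow hℓb (by norm_num)) (dvd_pow h2 (by norm_num))
    have hℓA : (ℓ : ℤ) ∣ A := hP.dvd_of_dvd_pow hA4
    have : (ℓ : ℤ) ∣ (Int.gcd A b : ℤ) := Int.dvd_coe_gcd hℓA hℓb
    rw [hg] at this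
    have : ℓ ∣ 1 := by exact_mod_cast this
    exact hℓ.one_lt.ne' (Nat.dvd_one.mp this)
  rcases Int.even_or_odd b with hbe | hbo
  · -- b even, c odd
    have hco : c % 2 = 1 := by
      rcases Int.even_or_odd c with hce | hco
      · exfalso
        obtain ⟨k, hk⟩ := hbe
        obtain ⟨j, hj⟩ := hce
        have h2 : (2 : ℤ) ∣ (Int.gcd (b ^ 2) c : ℤ) := by
          apply Int.dvd_coe_gcd
          · exact ⟨2 * k ^ 2, by rw [hk]; ring⟩
          · exact ⟨j, by rw [hj]; ring⟩
        rw [hgbc] at h2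
        norm_num at h2
      · exact Int.odd_iff.mp hco
    have htri : PythagoreanTriple c (b ^ 2) (A ^ 2) := by
      show c * c + b ^ 2 * b ^ 2 = A ^ 2 * A ^ 2
      ring_nf
      ring_nf at heq
      linarith
    obtain ⟨m, n, hcmn, hbmn, hAmn, hmn, hpar, hm0⟩ :=
      htri.coprime_classification' (by rw [Int.gcd_comm]; exact hgbc) hco (by positivity)
    have hmnpos : 0 < m * n := by
      have hb2pos : 0 < b ^ 2 := by positivity
      linarith [hbmn ▸ hb2pos]
    have hmpos : 0 < m := lt_of_le_of_ne hm0 (by rintro rfl; simp at hmnpos)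
    have hnpos : 0 < n := by
      rcases mul_pos_iff.mp hmnpos with h | h
      · exact h.2
      · exact absurd h.1 (not_lt.mpr hmpos.le)
    have hA2 : (0 : ℤ) < A := hApos
    -- second classification: A^2 = m^2 + n^2
    have key : ∃ p q : ℤ, 0 < q ∧ q < p ∧ Int.gcd p q = 1 ∧ (p + q) % 2 = 1 ∧
        A = p ^ 2 + q ^ 2 ∧ b ^ 2 = 4 * (p * q * ((p + q) * (p - q))) := by
      rcases hpar with ⟨hm2, hn2⟩ | ⟨hm2, hn2⟩
      · -- m even, n odd : use triple (n, m, A)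
        have htri2 : PythagoreanTriple n m A := by
          show n * n + m * m = A * A
          linear_combination -hAmn
        obtain ⟨p, q, hnpq, hmpq, hApq, hgpq, hpar2, hp0⟩ :=
          htri2.coprime_classification' (by rw [Int.gcd_comm]; exact hmn) hn2 hA2
        have hpqpos : 0 < p * q := by
          have h := hmpos; rw [hmpq] at h; linarith
        have hppos : 0 < p := lt_of_le_of_ne hp0 (by rintro rfl; simp at hpqpos)
        have hqpos : 0 < q := by
          rcases mul_pos_iff.mp hpqpos with h | h
          · exact h.2
          · exact absurd h.1 (not_lt.mpr hppos.le)
        have hqp : q < p := by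
          have h := hnpos; rw [hnpq] at h
          by_contra hle
          push_neg at hle
          have := pow_le_pow_left₀ hppos.le hle 2
          linarith
        refine ⟨p, q, hqpos, hqp, hgpq, by omega, hApq, ?_⟩
        rw [hbmn, hmpq, hnpq]; ring
      · -- m odd, n even : use triple (m, n, A)
        have htri2 : PythagoreanTriple m n A := by
          show m * m + n * n = A * A
          linear_combination -hAmn
        obtain ⟨p, q, hmpq, hnpq, hApq, hgpq, hpar2, hp0⟩ :=
          htri2.coprime_classification' hmn hm2 hA2
        have hpqpos : 0 < p * q := by
          have h := hnpos; rw [hnpq] at h; linarith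
        have hppos : 0 < p := lt_of_le_of_ne hp0 (by rintro rfl; simp at hpqpos)
        have hqpos : 0 < q := by
          rcases mul_pos_iff.mp hpqpos with h | h
          · exact h.2
          · exact absurd h.1 (not_lt.mpr hppos.le)
        have hqp : q < p := by
          have h := hmpos; rw [hmpq] at h
          by_contra hle
          push_neg at hle
          have := pow_le_pow_left₀ hppos.le hle 2
          linarith
        refine ⟨p, q, hqpos, hqp, hgpq, by omega, hApq, ?_⟩
        rw [hbmn, hmpq, hnpq]; ring
    obtain ⟨p, q, hqpos, hqp, hgpq, hparity, hApq, hb2⟩ := key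
    have hppos : 0 < p := hqpos.trans hqp
    -- b is even ; write b = 2w
    have h2b : (2 : ℤ) ∣ b := by
      apply Int.prime_two.dvd_of_dvd_pow (n := 2)
      exact ⟨2 * (p * q * ((p + q) * (p - q))), by rw [hb2]; ring⟩
    obtain ⟨w, hwb⟩ := h2b
    have hwpos : 0 < w := by omega
    have hw2 : w ^ 2 = p * q * ((p + q) * (p - q)) := by
      have h4 : 4 * w ^ 2 = 4 * (p * q * ((p + q) * (p - q))) := by
        rw [← hb2, hwb]; ring
      linarith
    -- coprimality facts
    have cp : IsCoprime p q := Int.isCoprime_iff_gcd_eq_one.mpr hgpq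
    have cppq : IsCoprime p (p + q) := by
      have h := cp.add_mul_left_right 1; rwa [mul_one, add_comm] at h
    have cppm : IsCoprime p (p - q) := by
      have h := cp.neg_right.add_mul_left_right 1
      rwa [mul_one, neg_add_eq_sub] at h
    have cqpq : IsCoprime q (p + q) := by
      have h := cp.symm.add_mul_left_right 1; rwa [mul_one] at h
    have cqpm : IsCoprime q (p - q) := by
      have h := cp.symm.add_mul_left_right (-1)
      rwa [mul_neg_one, ← sub_eq_add_neg] at h
    have csum : IsCoprime (p + q) (p - q) := coprime_add_sub hgpq hparity
    -- extract the four squares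
    obtain ⟨r, hr⟩ := Int.sq_of_isCoprime (cp.mul_right (cppq.mul_right cppm))
      (show p * (q * ((p + q) * (p - q))) = w ^ 2 by rw [hw2]; ring)
    have hr : p = r ^ 2 := by
      rcases hr with h | h
      · exact h
      · exfalso; linarith [sq_nonneg r]
    obtain ⟨s, hs⟩ := Int.sq_of_isCoprime (cp.symm.mul_right (cqpq.mul_right cqpm))
      (show q * (p * ((p + q) * (p - q))) = w ^ 2 by rw [hw2]; ring)
    have hs : q = s ^ 2 := by
      rcases hs with h | h
      · exact h
      · exfalso; linarith [sq_nonneg s]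
    obtain ⟨t, ht⟩ := Int.sq_of_isCoprime (cppq.symm.mul_right (cqpq.symm.mul_right csum))
      (show (p + q) * (p * (q * (p - q))) = w ^ 2 by rw [hw2]; ring)
    have ht : p + q = t ^ 2 := by
      rcases ht with h | h
      · exact h
      · exfalso; linarith [sq_nonneg t]
    obtain ⟨u, hu⟩ := Int.sq_of_isCoprime (cppm.symm.mul_right (cqpm.symm.mul_right csum.symm))
      (show (p - q) * (p * (q * (p + q))) = w ^ 2 by rw [hw2]; ring)
    have hu : p - q = u ^ 2 := by
      rcases hu with h | h
      · exact h
      · exfalso; linarith [sq_nonneg u]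
    -- new smaller solution : s^4 + (t*u)^2 = r^4
    have htu : (t * u) ^ 2 = p ^ 2 - q ^ 2 := by
      linear_combination (-(p - q)) * ht + (-(t ^ 2)) * hu
    have hcore : s ^ 4 + (t * u) ^ 2 = r ^ 4 := by
      linear_combination htu - (q + s ^ 2) * hs + (p + r ^ 2) * hr
    have hs0 : s ≠ 0 := by rintro rfl; simp at hs; omega
    have htu0 : t * u ≠ 0 := by
      rintro h0; rw [h0] at htu
      have hq2 : q ^ 2 < p ^ 2 := pow_lt_pow_left₀ hqp hqpos.le two_ne_zero
      simp at htu
      linarith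
    have heq3 : |s| ^ 4 + |t * u| ^ 2 = ((r.natAbs : ℤ)) ^ 4 := by
      rw [Int.natCast_natAbs, pow_abs, pow_abs, pow_abs,
        abs_of_nonneg (show (0:ℤ) ≤ s ^ 4 by positivity),
        abs_of_nonneg (sq_nonneg (t * u)),
        abs_of_nonneg (show (0:ℤ) ≤ r ^ 4 by positivity)]
      exact hcore
    have hlt : r.natAbs < a := by
      have h1 : |r| ≤ p := by
        rcases eq_or_ne r 0 with rfl | hr0
        · simpa using hppos.le
        · have h1r : 1 ≤ |r| := abs_pos.mpr hr0
          have h2r : |r| ≤ |r| ^ 2 := le_self_pow₀ h1r two_ne_zero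
          rw [sq_abs] at h2r
          linarith [hr ▸ h2r]
      have h2 : p < A := by
        have hp1 : (1 : ℤ) ≤ p := hppos
        have h3 : p ≤ p ^ 2 := le_self_pow₀ hp1 two_ne_zero
        have h4 : 0 < q ^ 2 := pow_pos hqpos 2
        linarith [hApq]
      have h3 : (r.natAbs : ℤ) < (a : ℤ) := by
        rw [Int.natCast_natAbs]
        calc |r| ≤ p := h1
          _ < A := h2
          _ = (a : ℤ) := hAdef.symm ▸ rfl
      exact_mod_cast h3
    exact IH r.natAbs hlt |s| |t * u| (abs_pos.mpr hs0) (abs_pos.mpr htu0) heq3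
  · -- b odd
    have htri : PythagoreanTriple (b ^ 2) c (A ^ 2) := by
      show b ^ 2 * b ^ 2 + c * c = A ^ 2 * A ^ 2
      ring_nf
      ring_nf at heq
      linarith
    have hb2odd : b ^ 2 % 2 = 1 := Int.odd_iff.mp (hbo.pow)
    obtain ⟨m, n, hbmn, hcmn, hAmn, hmn, hpar, hm0⟩ :=
      htri.coprime_classification' hgbc hb2odd (by positivity)
    have hn0 : n ≠ 0 := by rintro rfl; simp at hcmn; omega
    have hm1 : 0 < m := by
      rcases lt_or_eq_of_le hm0 with h | h
      · exact h
      · exfalso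
        rw [← h] at hbmn
        have := sq_nonneg n
        have := pow_pos hb 2
        norm_num at hbmn
        linarith
    have heq2 : |n| ^ 4 + (A * b) ^ 2 = ((m.toNat : ℤ)) ^ 4 := by
      rw [Int.toNat_of_nonneg hm0]
      have han : |n| ^ 4 = n ^ 4 := by
        rw [pow_abs, abs_of_nonneg (by positivity)]
      rw [han]
      linear_combination A ^ 2 * hbmn + (m ^ 2 - n ^ 2) * hAmn
    have hlt : m.toNat < a := by
      have h1 : m < A := by
        have hn2 : 0 < n ^ 2 := by positivity
        nlinarith [hn2]
      omega
    exact IH m.toNat hlt |n| (A * b) (abs_pos.mpr hn0) (by positivity) heq2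

/-- **The columns condition does not suffice for nonlinear systems.** The matrix
with rows `(1, −2, 1, 0)` and `(1, −1, 0, 1)` obeys the columns condition, yet the
corresponding quadric system `x² + z² = 2y²`, `x² + d² = y²` has no solutions in
positive integers, and hence is not partition regular over ℕ. -/
theorem stmt11 :
    ColumnsCondition (Matrix.of ![![1, -2, 1, 0], ![1, -1, 0, 1]] :
      Matrix (Fin 2) (Fin 4) ℤ) ∧
    (¬ ∃ x y z d : ℕ, 0 < x ∧ 0 < y ∧ 0 < z ∧ 0 < d ∧
      x ^ 2 + z ^ 2 = 2 * y ^ 2 ∧ x ^ 2 + d ^ 2 = y ^ 2) ∧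
    ¬ (∀ (r : ℕ) (c : ℕ → Fin (r + 1)), ∃ x y z d : ℕ,
      0 < x ∧ 0 < y ∧ 0 < z ∧ 0 < d ∧
      x ^ 2 + z ^ 2 = 2 * y ^ 2 ∧ x ^ 2 + d ^ 2 = y ^ 2 ∧
      c x = c y ∧ c y = c z ∧ c z = c d) := by
  have hnosol : ¬ ∃ x y z d : ℕ, 0 < x ∧ 0 < y ∧ 0 < z ∧ 0 < d ∧
      x ^ 2 + z ^ 2 = 2 * y ^ 2 ∧ x ^ 2 + d ^ 2 = y ^ 2 := by
    rintro ⟨x, y, z, d, hx, hy, hz, hd, h1, h2⟩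
    have h1' : (x : ℤ) ^ 2 + (z : ℤ) ^ 2 = 2 * (y : ℤ) ^ 2 := by exact_mod_cast h1
    have h2' : (x : ℤ) ^ 2 + (d : ℤ) ^ 2 = (y : ℤ) ^ 2 := by exact_mod_cast h2
    apply no_fermat_44 y (d : ℤ) ((x : ℤ) * (z : ℤ))
      (by exact_mod_cast hd) (by positivity)
    linear_combination (x : ℤ) ^ 2 * h1' + ((y : ℤ) ^ 2 + (d : ℤ) ^ 2 - (x : ℤ) ^ 2) * h2'
  refine ⟨?_, hnosol, ?_⟩
  · refine ⟨2, ![{0, 1, 2}, {3}], ?_, ?_, ?_, ?_, ?_⟩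
    · decide
    · decide
    · decide
    · intro i hi
      have : i = 0 := by omega
      subst this
      funext r
      fin_cases r <;> simp [Finset.sum_apply] <;> norm_num [Matrix.of_apply]
    · intro i hi
      have hi1 : i = 1 := by omega
      subst hi1
      have hmem0 : (fun r : Fin 2 => ((Matrix.of ![![1, -2, 1, 0], ![1, -1, 0, 1]] :
          Matrix (Fin 2) (Fin 4) ℤ) r (0 : Fin 4) : ℚ)) ∈
          ((fun j : Fin 4 => fun r : Fin 2 => ((Matrix.of ![![1, -2, 1, 0], ![1, -1, 0, 1]] :
          Matrix (Fin 2) (Fin 4) ℤ) r j : ℚ)) ''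
          {j : Fin 4 | ∃ i' : Fin 2, (i' : ℕ) < ((1 : Fin 2) : ℕ) ∧ j ∈ (![{0, 1, 2}, {3}] : Fin 2 → Finset (Fin 4)) i'}) :=
        ⟨0, ⟨0, by norm_num, by decide⟩, rfl⟩
      have hmem2 : (fun r : Fin 2 => ((Matrix.of ![![1, -2, 1, 0], ![1, -1, 0, 1]] :
          Matrix (Fin 2) (Fin 4) ℤ) r (2 : Fin 4) : ℚ)) ∈
          ((fun j : Fin 4 => fun r : Fin 2 => ((Matrix.of ![![1, -2, 1, 0], ![1, -1, 0, 1]] :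
          Matrix (Fin 2) (Fin 4) ℤ) r j : ℚ)) ''
          {j : Fin 4 | ∃ i' : Fin 2, (i' : ℕ) < ((1 : Fin 2) : ℕ) ∧ j ∈ (![{0, 1, 2}, {3}] : Fin 2 → Finset (Fin 4)) i'}) :=
        ⟨2, ⟨0, by norm_num, by decide⟩, rfl⟩
      have hsub := sub_mem (Submodule.subset_span (R := ℚ) hmem0) (Submodule.subset_span (R := ℚ) hmem2)
      convert hsub using 1
      funext r
      fin_cases r <;> simp [Finset.sum_apply] <;> norm_num [Matrix.of_apply]
  · intro h
    obtain ⟨x, y, z, d, hx, hy, hz, hd, h1, h2, -⟩ := h 0 (fun _ => 0)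
    exact hnosol ⟨x, y, z, d, hx, hy, hz, hd, h1, h2⟩
end

section
/- Let S ⊆ ℕ be multiplicatively syndetic (i.e., multiplicatively [M]-syndetic for some M ∈ ℕ). Then S has positive lower density: liminf_{N→∞} |S ∩ {1,...,N}|/N ≥ 1/M² > 0. -/
open Filter

/-- **Multiplicatively syndetic sets have positive lower density.** If `S` is
multiplicatively `[M]`-syndetic, then
`liminf_{N→∞} |S ∩ [N]|/N ≥ 1/M² > 0`. -/
theorem stmt12 (M : ℕ) (hM : 0 < M) (S : Set ℕ) (hS : MultSyndetic M S) :
    (0 : ℝ) < 1 / (M : ℝ) ^ 2 ∧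
    1 / (M : ℝ) ^ 2 ≤
      Filter.liminf
        (fun N : ℕ => (Nat.card (S ∩ Set.Icc 1 N : Set ℕ) : ℝ) / N)
        Filter.atTop := by
  have hM' : (0:ℝ) < M := by exact_mod_cast hM
  refine ⟨by positivity, ?_⟩
  choose m hm1 hm2 hmS using hS
  -- key counting: N/M ≤ M * |S ∩ [1,N]|
  have key : ∀ N : ℕ, N / M ≤ M * Nat.card (S ∩ Set.Icc 1 N : Set ℕ) := by
    intro N
    have hfin : (S ∩ Set.Icc 1 N).Finite :=
      (Set.finite_Icc 1 N).subset Set.inter_subset_right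
    rw [Nat.card_eq_card_finite_toFinset hfin]
    set f : ℕ → ℕ := fun x => if h : 0 < x then m x h * x else 0 with hf
    have himg : (Finset.Icc 1 (N/M)).image f ⊆ hfin.toFinset := by
      intro a ha
      simp only [Finset.mem_image, Finset.mem_Icc] at ha
      obtain ⟨x, ⟨hx1, hx2⟩, rfl⟩ := ha
      have hx : 0 < x := hx1
      simp only [hf, dif_pos hx, Set.Finite.mem_toFinset, Set.mem_inter_iff, Set.mem_Icc]
      refine ⟨hmS x hx, Nat.one_le_iff_ne_zero.mpr ?_, ?_⟩
      · exact Nat.mul_ne_zero (Nat.one_le_iff_ne_zero.mp (hm1 x hx)) (by omega)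
      · calc m x hx * x ≤ M * (N/M) := Nat.mul_le_mul (hm2 x hx) hx2
          _ ≤ N := by rw [Nat.mul_comm]; exact Nat.div_mul_le_self N M
    have hfib : ∀ a ∈ (Finset.Icc 1 (N/M)).image f,
        ((Finset.Icc 1 (N/M)).filter (fun x => f x = a)).card ≤ M := by
      intro a _
      have hsub : (Finset.Icc 1 (N/M)).filter (fun x => f x = a)
          ⊆ (Finset.Icc 1 M).image (fun k => a / k) := by
        intro x hx
        simp only [Finset.mem_filter, Finset.mem_Icc] at hx
        obtain ⟨⟨hx1, _⟩, hfx⟩ := hx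
        have hx0 : 0 < x := hx1
        rw [hf] at hfx
        simp only [dif_pos hx0] at hfx
        refine Finset.mem_image.mpr ⟨m x hx0, Finset.mem_Icc.mpr ⟨hm1 x hx0, hm2 x hx0⟩, ?_⟩
        rw [← hfx, Nat.mul_div_cancel_left _ (hm1 x hx0)]
      calc _ ≤ ((Finset.Icc 1 M).image (fun k => a / k)).card := Finset.card_le_card hsub
        _ ≤ (Finset.Icc 1 M).card := Finset.card_image_le
        _ = M := by simp
    calc N/M = (Finset.Icc 1 (N/M)).card := by simp
      _ ≤ M * ((Finset.Icc 1 (N/M)).image f).card :=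
          Finset.card_le_mul_card_image (Finset.Icc 1 (N/M)) M hfib
      _ ≤ M * hfin.toFinset.card := Nat.mul_le_mul_left M (Finset.card_le_card himg)
  -- eventual lower bound
  set g : ℕ → ℝ := fun N => 1/(M:ℝ)^2 - 1/(M*N) with hg
  have hev : ∀ᶠ N : ℕ in atTop, g N ≤ (Nat.card (S ∩ Set.Icc 1 N : Set ℕ) : ℝ) / N := by
    filter_upwards [eventually_ge_atTop 1] with N hN
    have hN' : (0:ℝ) < N := by exact_mod_cast hN
    set c : ℕ := Nat.card (S ∩ Set.Icc 1 N : Set ℕ) with hc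
    have h1 : N < M * (N / M) + M := by
      have := Nat.div_add_mod N M
      have := Nat.mod_lt N hM
      omega
    have h2 : (N:ℝ) < (M:ℝ)^2 * c + M := by
      have h3 : (N:ℝ) < M * ((N/M : ℕ) : ℝ) + M := by exact_mod_cast h1
      have h4 : ((N/M : ℕ) : ℝ) ≤ M * c := by exact_mod_cast key N
      nlinarith
    have heq : g N = ((N:ℝ) - M) / ((M:ℝ)^2 * N) := by
      simp only [hg]
      field_simp
    rw [heq, div_le_div_iff₀ (by positivity) hN']
    nlinarith [Nat.cast_nonneg (α := ℝ) c]
  have hgt : Tendsto g atTop (nhds (1/(M:ℝ)^2)) := by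
    have h0 : Tendsto (fun N : ℕ => 1/((M:ℝ)*N)) atTop (nhds 0) := by
      apply Tendsto.div_atTop tendsto_const_nhds
      exact Tendsto.const_mul_atTop hM' tendsto_natCast_atTop_atTop
    have h1 := (tendsto_const_nhds (x := 1/(M:ℝ)^2) (f := atTop)).sub h0
    rw [sub_zero] at h1
    exact h1
  calc 1/(M:ℝ)^2 = liminf g atTop := (hgt.liminf_eq).symm
    _ ≤ _ := by
        refine liminf_le_liminf hev hgt.isBoundedUnder_ge ?_
        apply Filter.isCoboundedUnder_ge_of_eventually_le (x := 1) atTop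
        filter_upwards [eventually_ge_atTop 1] with N hN
        have hN' : (0:ℝ) < N := by exact_mod_cast hN
        rw [div_le_one hN']
        have hle : Nat.card (S ∩ Set.Icc 1 N : Set ℕ) ≤ Nat.card (Set.Icc 1 N : Set ℕ) :=
          Nat.card_mono (Set.finite_Icc 1 N) Set.inter_subset_right
        have hIcc : Nat.card (Set.Icc 1 N : Set ℕ) = N := by
          rw [Nat.card_coe_set_eq, Set.ncard_eq_toFinset_card' , Set.toFinset_Icc, Nat.card_Icc]; omega
        rw [hIcc] at hle
        exact_mod_cast hle
end
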